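/- arXiv:2206.13853 — 8 statements merged into one kernel-verified Lean document; each statement's English description precedes it below -/
import Mathlib

section
/- Let N be a finitely generated torsion-free nilpotent group and H a finite index subgroup of N. Then the centralizer of H in N equals the center of N. -/
open scoped commutatorElement

/-- In any group, if the commutator `⁅a, b⁆` commutes with everything, then
`⁅a ^ m, b⁆ = ⁅a, b⁆ ^ m`. -/
lemma aux_commutator_pow {Q : Type*} [Group Q] (a b : Q)
    (hz : ∀ q : Q, Commute (⁅a, b⁆) q) (m : ℕ) :
    ⁅a ^ m, b⁆ = ⁅a, b⁆ ^ m := by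
  induction m with
  | zero => simp
  | succ m ih =>
    have key : ⁅a ^ (m + 1), b⁆ = a * ⁅a ^ m, b⁆ * a⁻¹ * ⁅a, b⁆ := by
      simp only [commutatorElement_def]
      group
    rw [key, ih, ((hz a).symm.pow_right m).eq, pow_succ]
    group

/-- Relative torsion-freeness of the upper central series quotients: if `G` is torsion-free,
`x ∈ Z_{i+1}` and `x ^ m ∈ Z_i` with `m ≠ 0`, then `x ∈ Z_i`. -/
lemma aux_ucs_step {G : Type*} [Group G] (htf : ∀ g : G, g ≠ 1 → ¬IsOfFinOrder g) :
    ∀ i : ℕ, ∀ x : G, ∀ m : ℕ, m ≠ 0 → x ∈ Subgroup.upperCentralSeries G (i + 1) →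
      x ^ m ∈ Subgroup.upperCentralSeries G i → x ∈ Subgroup.upperCentralSeries G i := by
  intro i
  induction i with
  | zero =>
    intro x m hm _ hxm
    rw [upperCentralSeries_zero, Subgroup.mem_bot] at hxm ⊢
    by_contra hx
    exact htf x hx (isOfFinOrder_iff_pow_eq_one.2 ⟨m, Nat.pos_of_ne_zero hm, hxm⟩)
  | succ i ih =>
    intro x m hm hx hxm
    rw [mem_upperCentralSeries_succ_iff]
    intro g
    have hmem : ∀ y z : G, y ∈ Subgroup.upperCentralSeries G (i + 1) →
        ⁅y, z⁆ ∈ Subgroup.upperCentralSeries G i := by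
      intro y z hy
      have := (mem_upperCentralSeries_succ_iff).1 hy z
      simpa [commutatorElement_def] using this
    have hc1 : ⁅x, g⁆ ∈ Subgroup.upperCentralSeries G (i + 1) := by
      have := (mem_upperCentralSeries_succ_iff).1 hx g
      simpa [commutatorElement_def] using this
    have goal_comm : ⁅x, g⁆ ∈ Subgroup.upperCentralSeries G i → x * g * x⁻¹ * g⁻¹ ∈ Subgroup.upperCentralSeries G i := by
      intro h; simpa [commutatorElement_def] using h
    apply goal_comm
    refine ih ⁅x, g⁆ m hm hc1 ?_
    -- work in the quotient G ⧸ U i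
    haveI : (Subgroup.upperCentralSeries G i).Normal := inferInstance
    set π : G →* G ⧸ Subgroup.upperCentralSeries G i := QuotientGroup.mk' _ with hπ
    have hker : ∀ y : G, π y = 1 ↔ y ∈ Subgroup.upperCentralSeries G i := fun y =>
      QuotientGroup.eq_one_iff y
    -- the commutator ⁅π x, π g⁆ is central in the quotient
    have hz : ∀ q : G ⧸ Subgroup.upperCentralSeries G i, Commute (⁅π x, π g⁆) q := by
      intro q
      induction q using QuotientGroup.induction_on with
      | H y =>
        have h2 : π (⁅⁅x, g⁆, y⁆) = 1 := (hker _).2 (hmem _ y hc1)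
        rw [map_commutatorElement] at h2
        have := commutatorElement_eq_one_iff_commute.1 h2
        exact this
    have hpow : π (⁅x, g⁆ ^ m) = 1 := by
      rw [map_pow, map_commutatorElement, ← aux_commutator_pow (π x) (π g) hz m,
        ← map_pow, ← map_commutatorElement]
      exact (hker _).2 (hmem _ g hxm)
    exact (hker _).1 hpow

/-- The center of a torsion-free nilpotent group is isolated. -/
lemma aux_center_isolated {G : Type*} [Group G] (htf : ∀ g : G, g ≠ 1 → ¬IsOfFinOrder g)
    [Group.IsNilpotent G] {x : G} {m : ℕ} (hm : m ≠ 0)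
    (hx : x ^ m ∈ Subgroup.center G) : x ∈ Subgroup.center G := by
  obtain ⟨K, hK⟩ := Group.IsNilpotent.nilpotent (G := G)
  have key : ∀ j : ℕ, x ∈ Subgroup.upperCentralSeries G (j + 1) → x ∈ Subgroup.upperCentralSeries G 1 := by
    intro j
    induction j with
    | zero => exact fun h => h
    | succ j ih =>
      intro h
      refine ih (aux_ucs_step htf (j + 1) x m hm h ?_)
      have : x ^ m ∈ Subgroup.upperCentralSeries G 1 := by
        rwa [upperCentralSeries_one]
      exact upperCentralSeries_mono G (Nat.one_le_iff_ne_zero.2 (Nat.succ_ne_zero j)) this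
  have hxtop : x ∈ Subgroup.upperCentralSeries G (K + 1) := by
    have : Subgroup.upperCentralSeries G (K + 1) = ⊤ :=
      top_le_iff.1 (hK ▸ upperCentralSeries_mono G (Nat.le_succ K))
    simp [this]
  have := key K hxtop
  rwa [upperCentralSeries_one] at this

/-- In a torsion-free nilpotent group, if `x` commutes with `y ^ m` for some `m ≠ 0`,
then `x` commutes with `y`. -/
lemma aux_commute_of_commute_pow {G : Type*} [Group G] (htf : ∀ g : G, g ≠ 1 → ¬IsOfFinOrder g)
    [Group.IsNilpotent G] {x y : G} {m : ℕ} (hm : m ≠ 0)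
    (h : Commute x (y ^ m)) : Commute x y := by
  set T : Subgroup G := Subgroup.centralizer {y ^ m} with hT
  have hxT : x ∈ T := by
    rw [hT, Subgroup.mem_centralizer_iff]
    rintro s ⟨rfl⟩
    exact h.symm.eq
  have hyT : y ∈ T := by
    rw [hT, Subgroup.mem_centralizer_iff]
    rintro s ⟨rfl⟩
    exact ((Commute.refl y).pow_left m).eq
  haveI : Group.IsNilpotent T := Subgroup.isNilpotent T
  have htfT : ∀ g : T, g ≠ 1 → ¬IsOfFinOrder g :=
    fun g hg hfo => htf g (fun h => hg (Subtype.ext h)) (T.subtype.isOfFinOrder hfo)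
  have hyc : (⟨y, hyT⟩ : T) ^ m ∈ Subgroup.center T := by
    rw [Subgroup.mem_center_iff]
    rintro ⟨t, ht⟩
    rw [Subgroup.mem_centralizer_iff] at ht
    have := ht (y ^ m) rfl
    ext
    push_cast
    simpa using this.symm
  have hcen : (⟨y, hyT⟩ : T) ∈ Subgroup.center T := aux_center_isolated htfT hm hyc
  have := (Subgroup.mem_center_iff.1 hcen) ⟨x, hxT⟩
  have h2 : x * y = y * x := congrArg Subtype.val this
  exact h2

/-- Let `N` be a finitely generated torsion-free nilpotent group and `H` a finite index
subgroup of `N`. Then the centralizer of `H` in `N` equals the center of `N`. -/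
theorem centralizer_of_finiteIndex_eq_center (N : Type*) [Group N]
    (hfg : Group.FG N) (htf : ∀ g : N, g ≠ 1 → ¬IsOfFinOrder g) [Group.IsNilpotent N]
    (H : Subgroup N) (hfin : H.FiniteIndex) :
    Subgroup.centralizer (H : Set N) = Subgroup.center N := by
  apply le_antisymm
  · intro g hg
    rw [Subgroup.mem_centralizer_iff] at hg
    rw [Subgroup.mem_center_iff]
    intro n
    obtain ⟨k, hk0, _, hkH⟩ := Subgroup.exists_pow_mem_of_index_ne_zero hfin.index_ne_zero n
    have hcomm : Commute g (n ^ k) := (hg (n ^ k) hkH).symm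
    have := aux_commute_of_commute_pow htf hk0.ne' hcomm
    exact this.symm.eq
  · intro g hg
    rw [Subgroup.mem_centralizer_iff]
    intro h _
    exact (Subgroup.mem_center_iff.1 hg h)
end

section
/- Let N be a finitely generated torsion-free nilpotent group, φ ∈ End(N), and k ∈ ℕ such that ker φ^k = ker φ^(2k). If im φ^k is a normal subgroup of N, then the subgroup generated by im φ^k and ker φ^k is isomorphic to the direct product (im φ^k) × (ker φ^k). -/
/-- If `ker φ^k = ker φ^(2k)` and `im φ^k` is normal in `N`, then the subgroup generated by
`im φ^k` and `ker φ^k` is isomorphic to the direct product `im φ^k × ker φ^k`. -/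
theorem range_sup_ker_mulEquiv_prod (N : Type*) [Group N]
    (hfg : Group.FG N) (htf : ∀ g : N, g ≠ 1 → ¬IsOfFinOrder g) [Group.IsNilpotent N]
    (φ : Monoid.End N) (k : ℕ)
    (hker : MonoidHom.ker (φ ^ k : Monoid.End N) = MonoidHom.ker (φ ^ (2 * k) : Monoid.End N))
    (hnorm : (MonoidHom.range (φ ^ k : Monoid.End N)).Normal) :
    Nonempty
      ((↥(MonoidHom.range (φ ^ k : Monoid.End N) ⊔ MonoidHom.ker (φ ^ k : Monoid.End N))) ≃*
        (↥(MonoidHom.range (φ ^ k : Monoid.End N)) ×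
          ↥(MonoidHom.ker (φ ^ k : Monoid.End N)))) := by
  set H := MonoidHom.range (φ ^ k : Monoid.End N) with hH
  set K := MonoidHom.ker (φ ^ k : Monoid.End N) with hK
  have hdis : Disjoint H K := by
    rw [Subgroup.disjoint_def]
    intro x hx hkx
    obtain ⟨y, rfl⟩ := hx
    have : y ∈ MonoidHom.ker (φ ^ (2 * k) : Monoid.End N) := by
      have h2 : (φ ^ (2 * k) : Monoid.End N) = (φ ^ k) * (φ ^ k) := by
        rw [two_mul, pow_add]
      show (φ ^ (2 * k)) y = 1
      rw [h2]
      exact hkx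
    rw [← hker] at this
    exact this
  have hcomm : ∀ (h : H) (kk : K), Commute ((h : N)) ((kk : N)) := fun h kk =>
    Subgroup.commute_of_normal_of_disjoint H K hnorm (MonoidHom.normal_ker _) hdis
      _ _ h.2 kk.2
  let f : (H × K) →* N := MonoidHom.noncommCoprod H.subtype K.subtype hcomm
  have hf : ∀ p : H × K, f p = (p.1 : N) * (p.2 : N) := fun p => rfl
  have hinj : Function.Injective f := by
    rw [← MonoidHom.ker_eq_bot_iff, Subgroup.eq_bot_iff_forall]
    rintro ⟨h, kk⟩ hp
    rw [MonoidHom.mem_ker, hf] at hp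
    have hhk : (h : N) = (kk : N)⁻¹ := eq_inv_of_mul_eq_one_left hp
    have hmem : (h : N) ∈ H ⊓ K := ⟨h.2, hhk ▸ K.inv_mem kk.2⟩
    rw [hdis.eq_bot] at hmem
    have h1 : h = 1 := Subtype.ext hmem
    have k1 : kk = 1 := by
      apply Subtype.ext
      have := hhk ▸ hmem
      simpa using this.symm
    simp [h1, k1, Prod.ext_iff]
  have hrange : f.range = H ⊔ K := by
    apply le_antisymm
    · rintro x ⟨⟨h, kk⟩, rfl⟩
      exact mul_mem (Subgroup.mem_sup_left h.2) (Subgroup.mem_sup_right kk.2)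
    · rw [sup_le_iff]
      constructor
      · rintro x hx
        exact ⟨(⟨x, hx⟩, 1), by simp [hf]⟩
      · rintro x hx
        exact ⟨(1, ⟨x, hx⟩), by simp [hf]⟩
  exact ⟨(MulEquiv.subgroupCongr hrange.symm).trans (MonoidHom.ofInjective hinj).symm⟩
end

section
/- Let G₁, …, Gₙ be groups and G = G₁ × ⋯ × Gₙ. The monoid End(G) is isomorphic to the monoid M of n×n matrices (φᵢⱼ) where φᵢⱼ ∈ Hom(Gⱼ, Gᵢ) and for each i and all k ≠ l, [im φᵢₖ, im φᵢₗ] = 1, with matrix multiplication given by composition and pointwise product. -/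
private lemma univ_noncommProd_eq_list {n : ℕ} {M : Type*} [Monoid M] (f : Fin n → M) (h) :
    (Finset.univ : Finset (Fin n)).noncommProd f h = ((List.finRange n).map f).prod := by
  simp only [Finset.noncommProd, Fin.univ_def, Multiset.map_coe, Multiset.noncommProd_coe]

private lemma prod_mulSingle_eq {n : ℕ} (G : Fin n → Type*) [∀ i, Group (G i)] (x : ∀ i, G i) :
    ((List.finRange n).map (fun l => Pi.mulSingle l (x l))).prod = x := by
  rw [← univ_noncommProd_eq_list _ (fun i j _ _ hij => Pi.mulSingle_commute hij _ _)]
  exact Finset.noncommProd_mulSingle x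

private lemma noncommPiCoprod_apply' {ι : Type*} [Fintype ι] {M : Type*} [Monoid M]
    {N : ι → Type*} [∀ i, Monoid (N i)] (ϕ : ∀ i, N i →* M)
    (hcomm : Pairwise fun i j => ∀ x y, Commute (ϕ i x) (ϕ j y)) (f : ∀ i, N i) :
    MonoidHom.noncommPiCoprod ϕ hcomm f
      = Finset.univ.noncommProd (fun i => ϕ i (f i)) (fun _ _ _ _ h => hcomm h _ _) := rfl

private lemma invFun_apply {n : ℕ} (G : Fin n → Type*) [∀ i, Group (G i)]
    (entry : ∀ i j : Fin n, G j →* G i)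
    (hcomm : ∀ i, Pairwise fun k l => ∀ x y, Commute (entry i k x) (entry i l y))
    (x : ∀ i, G i) (i : Fin n) :
    MonoidHom.noncommPiCoprod (entry i) (hcomm i) x
      = ((List.finRange n).map (fun l => entry i l (x l))).prod :=
  (noncommPiCoprod_apply' (entry i) (hcomm i) x).trans (univ_noncommProd_eq_list _ _)

private lemma key {n : ℕ} (G : Fin n → Type*) [∀ i, Group (G i)]
    (φ : (∀ i, G i) →* (∀ i, G i)) (x : ∀ i, G i) (i : Fin n) :
    ((List.finRange n).map (fun l => φ (Pi.mulSingle l (x l)) i)).prod = φ x i := by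
  have h := map_list_prod ((Pi.evalMonoidHom G i).comp φ)
    ((List.finRange n).map fun l => Pi.mulSingle l (x l))
  simpa [prod_mulSingle_eq, List.map_map, Function.comp_def] using h.symm

/-- The matrix monoid of endomorphisms of a direct product: matrices `(φᵢⱼ)` with
`φᵢⱼ ∈ Hom(Gⱼ, Gᵢ)` such that for `k ≠ l` the images of `φᵢₖ` and `φᵢₗ` commute. -/
structure EndMatrix {n : ℕ} (G : Fin n → Type*) [∀ i, Group (G i)] where
  entry : ∀ i j : Fin n, G j →* G i
  comm : ∀ i k l : Fin n, k ≠ l → ∀ (x : G k) (y : G l),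
    Commute (entry i k x) (entry i l y)

/-- `End(G₁ × ⋯ × Gₙ)` is isomorphic, as a monoid, to the monoid of matrices `(φᵢⱼ)` of
homomorphisms with row-wise commuting images, with matrix multiplication given by
composition and pointwise product: there is a bijection sending an endomorphism to its
matrix of components `πᵢ ∘ φ ∘ eⱼ`, under which the identity corresponds to the identity
matrix and composition corresponds to matrix multiplication. -/
theorem end_monoid_equiv_endMatrix (n : ℕ) (G : Fin n → Type*) [∀ i, Group (G i)] :
    ∃ e : Monoid.End (∀ i, G i) ≃ EndMatrix G,
      (∀ (φ : Monoid.End (∀ i, G i)) (i j : Fin n) (g : G j),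
        (e φ).entry i j g = φ (Pi.mulSingle j g) i) ∧
      (∀ (i j : Fin n) (g : G j),
        (e 1).entry i j g = if h : i = j then h ▸ g else 1) ∧
      (∀ (φ ψ : Monoid.End (∀ i, G i)) (i j : Fin n) (g : G j),
        (e (φ * ψ)).entry i j g =
          ((List.finRange n).map (fun l => (e φ).entry i l ((e ψ).entry l j g))).prod) := by
  refine ⟨{
    toFun := fun φ => ⟨fun i j => (Pi.evalMonoidHom G i).comp
        ((φ : (∀ i, G i) →* (∀ i, G i)).comp (MonoidHom.mulSingle G j)),
      fun i k l h x y =>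
        ((Pi.mulSingle_commute h x y).map (φ : (∀ i, G i) →* (∀ i, G i))).map
          (Pi.evalMonoidHom G i)⟩,
    invFun := fun M => Pi.monoidHom fun i =>
      MonoidHom.noncommPiCoprod (M.entry i) (fun k l h x y => M.comm i k l h x y),
    left_inv := fun φ => by
      refine MonoidHom.ext fun x => funext fun i => ?_
      exact (invFun_apply G
        (fun i j => (Pi.evalMonoidHom G i).comp
          ((φ : (∀ i, G i) →* (∀ i, G i)).comp (MonoidHom.mulSingle G j)))
        (fun i k l h a b =>
          ((Pi.mulSingle_commute h a b).map (φ : (∀ i, G i) →* (∀ i, G i))).map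
            (Pi.evalMonoidHom G i)) x i).trans (key G φ x i),
    right_inv := fun M => by
      cases M with
      | mk entry comm =>
        simp only [EndMatrix.mk.injEq]
        congr 1
        funext i j
        ext g
        exact MonoidHom.noncommPiCoprod_mulSingle (ϕ := entry i)
          (hcomm := fun k l h a b => comm i k l h a b) j g }, ?_, ?_, ?_⟩
  · intro φ i j g; rfl
  · intro i j g
    show Pi.mulSingle j g i = _
    by_cases h : i = j
    · subst h; simp
    · simp [Pi.mulSingle_eq_of_ne h, h]
  · intro φ ψ i j g
    exact (key G φ (ψ (Pi.mulSingle j g)) i).symm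
end

section
/- Let N be a finitely generated torsion-free nilpotent group whose rational Malcev completion decomposes as N^ℚ = A × B with A and B nontrivial. Set N_A = A ∩ N and N_B = B ∩ N. Then N_A and N_B are nontrivial, ⟨N_A, N_B⟩ ≅ N_A × N_B, and ⟨N_A, N_B⟩ has finite index in N. -/
/-- `ι : N →* M` realizes `M` as the rational Malcev completion of `N`: `M` is a
torsion-free nilpotent group into which `N` embeds, every element of `M` has a unique
`k`-th root for every `k ≥ 1`, and every element of `M` has some positive power lying in
(the image of) `N`. -/
structure IsRationalMalcevCompletion {N M : Type*} [Group N] [Group M] (ι : N →* M) :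
    Prop where
  nilpotent : Group.IsNilpotent M
  torsionFree : ∀ g : M, g ≠ 1 → ¬IsOfFinOrder g
  injective : Function.Injective ι
  uniqueRoots : ∀ (m : M) (k : ℕ), 0 < k → ∃! x : M, x ^ k = m
  cofinal : ∀ m : M, ∃ k : ℕ, 0 < k ∧ m ^ k ∈ MonoidHom.range ι

/-- A finitely generated torsion nilpotent group is finite. -/
theorem finite_of_fg_torsion_nilpotent (G : Type*) [Group G] [Group.IsNilpotent G]
    (hfg : Group.FG G) (ht : Monoid.IsTorsion G) : Finite G := by
  revert hfg ht
  refine nilpotent_center_quotient_ind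
    (P := fun G _ _ => Group.FG G → Monoid.IsTorsion G → Finite G) G
    (fun G _ _ _ _ => Finite.of_subsingleton) (fun G _ _ ih hfg ht => ?_)
  haveI : Group.FG G := hfg
  haveI : Finite (G ⧸ Subgroup.center G) :=
    ih inferInstance (IsTorsion.of_surjective (QuotientGroup.mk'_surjective ((Subgroup.center G))) ht)
  haveI : (Subgroup.center G).FiniteIndex := Subgroup.finiteIndex_of_finite_quotient
  haveI : Group.FG (Subgroup.center G) := Subgroup.fg_of_index_ne_zero _
  haveI : Finite (Subgroup.center G) :=
    open scoped IsMulCommutative in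
    CommGroup.finite_of_fg_torsion _ (IsTorsion.subgroup ht _)
  exact Finite.of_subgroup_quotient (H := Subgroup.center G)

/-- A normal subgroup of a finitely generated nilpotent group in which every element has a
positive power has finite index. -/
theorem finiteIndex_of_pow_mem (G : Type*) [Group G] [Group.IsNilpotent G]
    (hfg : Group.FG G) (H : Subgroup G) [H.Normal]
    (h : ∀ g : G, ∃ k : ℕ, 0 < k ∧ g ^ k ∈ H) : H.FiniteIndex := by
  haveI : Group.FG G := hfg
  have ht : Monoid.IsTorsion (G ⧸ H) := by
    intro x
    obtain ⟨g, rfl⟩ := QuotientGroup.mk_surjective x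
    obtain ⟨k, hk, hgk⟩ := h g
    refine isOfFinOrder_iff_pow_eq_one.mpr ⟨k, hk, ?_⟩
    rw [← QuotientGroup.mk_pow, QuotientGroup.eq_one_iff]
    exact hgk
  haveI : Finite (G ⧸ H) := finite_of_fg_torsion_nilpotent (G ⧸ H) inferInstance ht
  exact Subgroup.finiteIndex_of_finite_quotient

/-- If the rational Malcev completion of `N` decomposes as `A × B` with `A`, `B`
nontrivial, then `N_A = A ∩ N` and `N_B = B ∩ N` are nontrivial, their join is their
internal direct product, and it has finite index in `N`. -/
theorem decomposition_of_malcev_completion (N A B : Type*) [Group N] [Group A] [Group B]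
    [Nontrivial A] [Nontrivial B]
    (hfg : Group.FG N) (htf : ∀ g : N, g ≠ 1 → ¬IsOfFinOrder g) [Group.IsNilpotent N]
    (ι : N →* A × B) (hι : IsRationalMalcevCompletion ι) :
    (Subgroup.comap ι (MonoidHom.ker (MonoidHom.snd A B)) ≠ ⊥) ∧
    (Subgroup.comap ι (MonoidHom.ker (MonoidHom.fst A B)) ≠ ⊥) ∧
    Nonempty
      ((↥(Subgroup.comap ι (MonoidHom.ker (MonoidHom.snd A B)) ⊔
          Subgroup.comap ι (MonoidHom.ker (MonoidHom.fst A B)))) ≃*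
        (↥(Subgroup.comap ι (MonoidHom.ker (MonoidHom.snd A B))) ×
          ↥(Subgroup.comap ι (MonoidHom.ker (MonoidHom.fst A B))))) ∧
    (Subgroup.comap ι (MonoidHom.ker (MonoidHom.snd A B)) ⊔
        Subgroup.comap ι (MonoidHom.ker (MonoidHom.fst A B))).FiniteIndex := by
  set NA := Subgroup.comap ι (MonoidHom.ker (MonoidHom.snd A B)) with hNA
  set NB := Subgroup.comap ι (MonoidHom.ker (MonoidHom.fst A B)) with hNB
  -- membership characterizations
  have memA : ∀ x : N, x ∈ NA ↔ (ι x).2 = 1 := fun x => Iff.rfl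
  have memB : ∀ x : N, x ∈ NB ↔ (ι x).1 = 1 := fun x => Iff.rfl
  -- nontriviality of NA
  have hne : ∀ (m : A × B), m ≠ 1 → ∃ n : N, n ≠ 1 ∧ ∃ k : ℕ, 0 < k ∧ ι n = m ^ k := by
    intro m hm
    obtain ⟨k, hk, n, hn⟩ := hι.cofinal m
    refine ⟨n, ?_, k, hk, hn⟩
    rintro rfl
    apply hι.torsionFree m hm
    refine isOfFinOrder_iff_pow_eq_one.mpr ⟨k, hk, ?_⟩
    rw [← hn, map_one]
  obtain ⟨a, ha⟩ := exists_ne (1 : A)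
  obtain ⟨b, hb⟩ := exists_ne (1 : B)
  obtain ⟨na, hna, ka, hka, hna'⟩ := hne (a, 1) (by simp [ha])
  obtain ⟨nb, hnb, kb, hkb, hnb'⟩ := hne (1, b) (by simp [hb])
  have hnaA : na ∈ NA := by rw [memA, hna']; simp
  have hnbB : nb ∈ NB := by rw [memB, hnb']; simp
  have h1 : NA ≠ ⊥ := fun h => hna (Subgroup.mem_bot.mp (h ▸ hnaA))
  have h2 : NB ≠ ⊥ := fun h => hnb (Subgroup.mem_bot.mp (h ▸ hnbB))
  -- images
  have imgA : ∀ x : NA, ι (x : N) = ((ι (x : N)).1, 1) := by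
    intro x
    have := (memA x).mp x.2
    exact Prod.ext rfl this
  have imgB : ∀ y : NB, ι (y : N) = (1, (ι (y : N)).2) := by
    intro y
    have := (memB y).mp y.2
    exact Prod.ext this rfl
  -- commuting
  have hcomm : ∀ (x : NA) (y : NB), Commute (NA.subtype x) (NB.subtype y) := by
    intro x y
    have : ι ((x : N) * (y : N)) = ι ((y : N) * (x : N)) := by
      rw [map_mul, map_mul, imgA x, imgB y]
      ext <;> simp
    exact hι.injective this
  set φ := MonoidHom.noncommCoprod NA.subtype NB.subtype hcomm with hφ
  have hφ_apply : ∀ p : NA × NB, φ p = (p.1 : N) * (p.2 : N) := fun p => rfl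
  have hinj : Function.Injective φ := by
    rw [← MonoidHom.ker_eq_bot_iff]
    rw [Subgroup.eq_bot_iff_forall]
    rintro ⟨x, y⟩ hx
    have hxy : (x : N) * (y : N) = 1 := hx
    have hx' : (x : N) = (y : N)⁻¹ := eq_inv_of_mul_eq_one_left hxy
    have h2 : (ι (x : N)).2 = 1 := (memA _).mp x.2
    have h1' : (ι (x : N)).1 = 1 := by
      rw [hx', map_inv]
      have := (memB _).mp y.2
      simp [this]
    have : ι (x : N) = 1 := Prod.ext h1' h2
    have hx1 : (x : N) = 1 := hι.injective (by rw [this, map_one])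
    have hy1 : (y : N) = 1 := by rw [hx'] at hx1; simpa using hx1
    ext <;> simp [hx1, hy1]
  have hrange : φ.range = NA ⊔ NB := by
    apply le_antisymm
    · rintro _ ⟨⟨x, y⟩, rfl⟩
      rw [hφ_apply]
      exact mul_mem (Subgroup.mem_sup_left x.2) (Subgroup.mem_sup_right y.2)
    · rw [sup_le_iff]
      constructor
      · intro x hx
        exact ⟨(⟨x, hx⟩, 1), by simp [hφ_apply]⟩
      · intro y hy
        exact ⟨(1, ⟨y, hy⟩), by simp [hφ_apply]⟩
  refine ⟨h1, h2, ⟨((MonoidHom.ofInjective hinj).trans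
    (MulEquiv.subgroupCongr hrange)).symm⟩, ?_⟩
  -- finite index
  haveI : NA.Normal := Subgroup.Normal.comap (MonoidHom.normal_ker _) ι
  haveI : NB.Normal := Subgroup.Normal.comap (MonoidHom.normal_ker _) ι
  apply finiteIndex_of_pow_mem N hfg
  intro g
  obtain ⟨k1, hk1, x, hx⟩ := hι.cofinal ((ι g).1, 1)
  obtain ⟨k2, hk2, y, hy⟩ := hι.cofinal (1, (ι g).2)
  have hxA : x ∈ NA := by rw [memA, hx]; simp
  have hyB : y ∈ NB := by rw [memB, hy]; simp
  refine ⟨k1 * k2, Nat.mul_pos hk1 hk2, ?_⟩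
  have : ι (g ^ (k1 * k2)) = ι (x ^ k2 * y ^ k1) := by
    rw [map_pow, map_mul, map_pow, map_pow, hx, hy]
    ext <;> simp [← pow_mul, mul_comm k1 k2]
  rw [hι.injective this]
  exact mul_mem (Subgroup.mem_sup_left (pow_mem hxA k2))
    (Subgroup.mem_sup_right (pow_mem hyB k1))
end

section
/- A finitely generated torsion-free nilpotent group N is rationally indecomposable (its rational Malcev completion is directly indecomposable) if and only if every finite index subgroup of N is directly indecomposable. -/
/-- A group is directly indecomposable if whenever it is isomorphic to a direct product
`H × K`, one of the factors is trivial. -/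
def DirectlyIndecomposable (G : Type u) [Group G] : Prop :=
  ∀ (H K : Type u) (_ : Group H) (_ : Group K),
    Nonempty (G ≃* H × K) → Subsingleton H ∨ Subsingleton K


open Pointwise
open scoped commutatorElement

lemma lcs_succ' {G : Type*} [Group G] (n : ℕ) :
    Subgroup.lowerCentralSeries (⊤ : Subgroup G) (n + 1) = ⁅Subgroup.lowerCentralSeries (⊤ : Subgroup G) n, (⊤ : Subgroup G)⁆ := rfl

lemma lcs_map_surj {G G' : Type*} [Group G] [Group G'] (f : G →* G')
    (hf : Function.Surjective f) (n : ℕ) :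
    Subgroup.map f (Subgroup.lowerCentralSeries (⊤ : Subgroup G) n) = Subgroup.lowerCentralSeries (⊤ : Subgroup G') n := by
  induction n with
  | zero => simpa [Subgroup.lowerCentralSeries_zero] using Subgroup.map_top_of_surjective f hf
  | succ n ih =>
      rw [lcs_succ', lcs_succ', Subgroup.map_commutator, ih,
        Subgroup.map_top_of_surjective f hf]

private def isolPart {K : Type*} [Group K] (S L : Subgroup K)
    (hL : ∀ z ∈ L, ∀ g : K, Commute z g) : Subgroup K where
  carrier := {z | z ∈ L ∧ ∃ n : ℕ, 0 < n ∧ z ^ n ∈ S}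
  one_mem' := ⟨L.one_mem, 1, one_pos, by simpa using S.one_mem⟩
  mul_mem' := by
    rintro a b ⟨haL, n, hn, hnS⟩ ⟨hbL, m, hm, hmS⟩
    refine ⟨L.mul_mem haL hbL, n * m, Nat.mul_pos hn hm, ?_⟩
    have hc : Commute a b := hL a haL b
    rw [hc.mul_pow]
    exact S.mul_mem (by rw [pow_mul]; exact S.pow_mem hnS m)
      (by rw [mul_comm n m, pow_mul]; exact S.pow_mem hmS n)
  inv_mem' := by
    rintro a ⟨haL, n, hn, hnS⟩
    exact ⟨L.inv_mem haL, n, hn, by rw [inv_pow]; exact S.inv_mem hnS⟩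

lemma comm_hom_right {K : Type*} [Group K] (u t₁ t₂ : K)
    (h : ∀ g : K, Commute ⁅u, t₂⁆ g) :
    ⁅u, t₁ * t₂⁆ = ⁅u, t₁⁆ * ⁅u, t₂⁆ := by
  have h1 : t₁ * ⁅u, t₂⁆ = ⁅u, t₂⁆ * t₁ := ((h t₁).symm).eq
  simp only [commutatorElement_def]
  rw [show u * (t₁ * t₂) * u⁻¹ * (t₁ * t₂)⁻¹ =
      (u * t₁ * u⁻¹ * t₁⁻¹) * (t₁ * (u * t₂ * u⁻¹ * t₂⁻¹) * t₁⁻¹) by group]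
  rw [show t₁ * (u * t₂ * u⁻¹ * t₂⁻¹) * t₁⁻¹ = t₁ * ⁅u, t₂⁆ * t₁⁻¹ by
    simp [commutatorElement_def]]
  rw [h1]; group

lemma comm_hom_left {K : Type*} [Group K] (u₁ u₂ s : K)
    (h : ∀ g : K, Commute ⁅u₂, s⁆ g) :
    ⁅u₁ * u₂, s⁆ = ⁅u₂, s⁆ * ⁅u₁, s⁆ := by
  have h1 : u₁ * ⁅u₂, s⁆ = ⁅u₂, s⁆ * u₁ := ((h u₁).symm).eq
  simp only [commutatorElement_def]
  rw [show u₁ * u₂ * s * (u₁ * u₂)⁻¹ * s⁻¹ =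
      (u₁ * (u₂ * s * u₂⁻¹ * s⁻¹) * u₁⁻¹) * (u₁ * s * u₁⁻¹ * s⁻¹) by group]
  rw [show u₁ * (u₂ * s * u₂⁻¹ * s⁻¹) * u₁⁻¹ = u₁ * ⁅u₂, s⁆ * u₁⁻¹ by
    simp [commutatorElement_def]]
  rw [h1]; group

lemma comm_pow_right {K : Type*} [Group K] (u t : K)
    (h : ∀ g : K, Commute ⁅u, t⁆ g) (n : ℕ) : ⁅u, t ^ n⁆ = ⁅u, t⁆ ^ n := by
  induction n with
  | zero => simp
  | succ n ih => rw [pow_succ, comm_hom_right u (t ^ n) t h, ih, pow_succ]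

lemma comm_pow_left {K : Type*} [Group K] (u s : K)
    (h : ∀ (n : ℕ) (g : K), Commute ⁅u ^ n, s⁆ g) (n : ℕ) : ⁅u ^ n, s⁆ = ⁅u, s⁆ ^ n := by
  induction n with
  | zero => simp
  | succ n ih =>
      rw [pow_succ', comm_hom_left u (u ^ n) s (h n), ih, ← pow_succ]

/-- Master isolator lemma: in a nilpotent group generated by `X`, if every element of `X`
has a positive power in `S`, then every element has a positive power in `S`. -/
lemma master_aux (c : ℕ) : ∀ {K : Type u} [Group K] [Group.IsNilpotent K],
    Group.nilpotencyClass K ≤ c → ∀ (S : Subgroup K) (X : Set K),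
    Subgroup.closure X = ⊤ → (∀ x ∈ X, ∃ a : ℕ, 0 < a ∧ x ^ a ∈ S) →
    ∀ g : K, ∃ m : ℕ, 0 < m ∧ g ^ m ∈ S := by
  induction c with
  | zero =>
      intro K _ _ hc S X hX hpow g
      have hs : Subsingleton K :=
        nilpotencyClass_zero_iff_subsingleton.mp (Nat.le_zero.mp hc)
      exact ⟨1, one_pos, by rw [pow_one, Subsingleton.elim g (1 : K)]; exact S.one_mem⟩
  | succ c ih =>
      intro K _ _ hc S X hX hpow g
      have hbot : Subgroup.lowerCentralSeries (⊤ : Subgroup K) (c + 1) = ⊥ :=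
        lowerCentralSeries_eq_bot_iff_nilpotencyClass_le.mpr hc
      set L : Subgroup K := Subgroup.lowerCentralSeries (⊤ : Subgroup K) c with hLdef
      have hLcen : ∀ z ∈ L, ∀ g : K, Commute z g := by
        intro z hz g
        have h1 : ⁅z, g⁆ ∈ Subgroup.lowerCentralSeries (⊤ : Subgroup K) (c + 1) := by
          rw [lcs_succ']; exact Subgroup.commutator_mem_commutator hz (Subgroup.mem_top g)
        rw [hbot, Subgroup.mem_bot] at h1
        exact commutatorElement_eq_one_iff_commute.mp h1
      -- quotient
      set mk : K →* K ⧸ L := QuotientGroup.mk' L with hmkdef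
      have hmksurj : Function.Surjective mk := QuotientGroup.mk'_surjective L
      have hker : mk.ker = L := QuotientGroup.ker_mk' L
      have hclassQ : Group.nilpotencyClass (K ⧸ L) ≤ c := by
        rw [← lowerCentralSeries_eq_bot_iff_nilpotencyClass_le, ← lcs_map_surj mk hmksurj c]
        rw [eq_bot_iff]
        intro q hq
        rw [Subgroup.mem_map] at hq
        obtain ⟨z, hz, rfl⟩ := hq
        simpa [Subgroup.mem_bot, ← MonoidHom.mem_ker, hker] using hz
      have hQ := ih hclassQ (S.map mk) (mk '' X)
        (by rw [← MonoidHom.map_closure, hX, ← MonoidHom.range_eq_map,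
              MonoidHom.range_eq_top]; exact hmksurj)
        (by rintro x' ⟨x, hx, rfl⟩
            obtain ⟨a, ha, haS⟩ := hpow x hx
            exact ⟨a, ha, by rw [← map_pow]; exact Subgroup.mem_map_of_mem mk haS⟩)
      have hSL : ∀ g : K, ∃ m : ℕ, 0 < m ∧ g ^ m ∈ S ⊔ L := by
        intro g
        obtain ⟨m, hm, hmS⟩ := hQ (mk g)
        rw [← map_pow] at hmS
        have h2 : g ^ m ∈ Subgroup.comap mk (Subgroup.map mk S) := hmS
        rw [Subgroup.comap_map_eq, hker] at h2
        exact ⟨m, hm, h2⟩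
      have hdec : ∀ w ∈ (S ⊔ L : Subgroup K), ∃ s ∈ S, ∃ z ∈ L, w = s * z := by
        intro w hw
        have hmem : w ∈ ((S : Set K) * (L : Set K)) := by
          rw [← Subgroup.mul_normal S L]; exact hw
        obtain ⟨s, hs, z, hz, rfl⟩ := hmem
        exact ⟨s, hs, z, hz, rfl⟩
      -- subclaim: every element of L has a power in S
      have hzL : ∀ z ∈ L, ∃ n : ℕ, 0 < n ∧ z ^ n ∈ S := by
        rcases Nat.eq_zero_or_pos c with hc0 | hcpos
        · -- c = 0 : L = ⊤, K abelian
          subst hc0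
          intro z _
          -- K is abelian: every two elements commute
          have hcomm : ∀ a b : K, Commute a b := fun a b =>
            hLcen a (by rw [hLdef, Subgroup.lowerCentralSeries_zero]; exact Subgroup.mem_top a) b
          have hT : Subgroup.closure X ≤ isolPart S ⊤ (fun z _ g => hcomm z g) := by
            rw [Subgroup.closure_le]
            intro x hx
            exact ⟨Subgroup.mem_top x, hpow x hx⟩
          have := hT (by rw [hX]; exact Subgroup.mem_top z)
          exact this.2
        · obtain ⟨c', rfl⟩ : ∃ c', c = c' + 1 := ⟨c - 1, by omega⟩
          -- now c = c' + 1
          set Lp : Subgroup K := Subgroup.lowerCentralSeries (⊤ : Subgroup K) c' with hLpdef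
          have hLcomm : L = ⁅Lp, (⊤ : Subgroup K)⁆ := lcs_succ' c'
          have hcenc : ∀ u ∈ Lp, ∀ t g : K, Commute ⁅u, t⁆ g := by
            intro u hu t g
            apply hLcen
            rw [hLcomm]
            exact Subgroup.commutator_mem_commutator hu (Subgroup.mem_top t)
          have hLT : L ≤ isolPart S L hLcen := by
            refine le_of_eq_of_le hLcomm (Subgroup.commutator_le.mpr ?_)
            intro u hu t _
            have hmemL : ⁅u, t⁆ ∈ L := by
              rw [hLcomm]; exact Subgroup.commutator_mem_commutator hu (Subgroup.mem_top t)
            refine ⟨hmemL, ?_⟩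
            obtain ⟨m₁, hm₁, hm₁S⟩ := hSL t
            obtain ⟨s, hs, z, hz, hEq⟩ := hdec _ hm₁S
            obtain ⟨m₂, hm₂, hm₂S⟩ := hSL u
            obtain ⟨s', hs', z', hz', hEq'⟩ := hdec _ hm₂S
            have h1 : ⁅u, t⁆ ^ m₁ = ⁅u, s⁆ := by
              rw [← comm_pow_right u t (hcenc u hu t), hEq,
                comm_hom_right u s z (hcenc u hu z),
                commutatorElement_eq_one_iff_commute.mpr ((hLcen z hz u).symm), mul_one]
            have h2 : ⁅u, s⁆ ^ m₂ = ⁅s', s⁆ := by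
              rw [← comm_pow_left u s (fun n g => hcenc (u ^ n) (Lp.pow_mem hu n) s g), hEq',
                comm_hom_left s' z' s (fun g => by
                  rw [commutatorElement_eq_one_iff_commute.mpr (hLcen z' hz' s)]
                  exact Commute.one_left g),
                commutatorElement_eq_one_iff_commute.mpr (hLcen z' hz' s), one_mul]
            refine ⟨m₁ * m₂, Nat.mul_pos hm₁ hm₂, ?_⟩
            rw [pow_mul, h1, h2]
            exact Subgroup.mul_mem _ (Subgroup.mul_mem _ (Subgroup.mul_mem _ hs' hs)
              (Subgroup.inv_mem _ hs')) (Subgroup.inv_mem _ hs)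
          intro z hz
          exact (hLT hz).2
      -- finish
      obtain ⟨m, hm, hmS⟩ := hSL g
      obtain ⟨s, hs, z, hz, hEq⟩ := hdec _ hmS
      obtain ⟨n, hn, hnS⟩ := hzL z hz
      refine ⟨m * n, Nat.mul_pos hm hn, ?_⟩
      rw [pow_mul, hEq, ((hLcen z hz s).symm).mul_pow]
      exact S.mul_mem (S.pow_mem hs n) hnS

lemma cc_right {K : Type*} [Group K] (a s z : K) (hz : ∀ g : K, Commute z g) :
    ⁅a, s * z⁆ = ⁅a, s⁆ := by
  simp only [commutatorElement_def, mul_inv_rev]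
  rw [show a * (s * z) * a⁻¹ * (z⁻¹ * s⁻¹) = a * s * (z * a⁻¹ * z⁻¹) * s⁻¹ by group,
    show z * a⁻¹ * z⁻¹ = a⁻¹ by rw [(hz a⁻¹).eq]; group]

lemma cc_left {K : Type*} [Group K] (s z b : K) (hz : ∀ g : K, Commute z g) :
    ⁅s * z, b⁆ = ⁅s, b⁆ := by
  simp only [commutatorElement_def, mul_inv_rev]
  rw [show s * z * b * (z⁻¹ * s⁻¹) * b⁻¹ = s * (z * b * z⁻¹) * s⁻¹ * b⁻¹ by group,
    show z * b * z⁻¹ = b by rw [(hz b).eq]; group]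

/-- A subgroup of a f.g. nilpotent group in which every element has a positive power
has finite index. -/
lemma fi_aux (c : ℕ) : ∀ {G : Type u} [Group G] [Group.IsNilpotent G] [Group.FG G],
    Group.nilpotencyClass G ≤ c → ∀ S : Subgroup G,
    (∀ g : G, ∃ k : ℕ, 0 < k ∧ g ^ k ∈ S) → S.FiniteIndex := by
  induction c with
  | zero =>
      intro G _ _ _ hc S _
      have hs : Subsingleton G :=
        nilpotencyClass_zero_iff_subsingleton.mp (Nat.le_zero.mp hc)
      have hST : S = ⊤ := by
        rw [Subgroup.eq_top_iff']
        intro g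
        rw [Subsingleton.elim g (1 : G)]; exact S.one_mem
      rw [hST]; infer_instance
  | succ c ih =>
      intro G _ _ _ hc S hS
      set Z : Subgroup G := Subgroup.center G with hZdef
      set mk : G →* G ⧸ Z := QuotientGroup.mk' Z with hmkdef
      have hmksurj : Function.Surjective mk := QuotientGroup.mk'_surjective Z
      have hclassQ : Group.nilpotencyClass (G ⧸ Z) ≤ c := by
        rw [nilpotencyClass_quotient_center]; omega
      have hSQ : ∀ q : G ⧸ Z, ∃ k : ℕ, 0 < k ∧ q ^ k ∈ S.map mk := by
        intro q
        obtain ⟨g, rfl⟩ := hmksurj q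
        obtain ⟨k, hk, hkS⟩ := hS g
        exact ⟨k, hk, by rw [← map_pow]; exact Subgroup.mem_map_of_mem mk hkS⟩
      haveI hfiQ : (S.map mk).FiniteIndex := ih hclassQ (S.map mk) hSQ
      -- T = S ⊔ Z has finite index
      set T : Subgroup G := S ⊔ Z with hTdef
      have hT : T = Subgroup.comap mk (S.map mk) := by
        rw [Subgroup.comap_map_eq, QuotientGroup.ker_mk']
      haveI hfiT : T.FiniteIndex := by
        constructor
        rw [hT, Subgroup.index_comap_of_surjective _ hmksurj]
        exact hfiQ.index_ne_zero
      haveI hfgT : Group.FG ↥T := Subgroup.fg_of_index_ne_zero T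
      have hle : S ≤ T := le_sup_left
      set S' : Subgroup ↥T := S.subgroupOf T with hS'def
      have hdec : ∀ t ∈ T, ∃ s ∈ S, ∃ z ∈ Z, t = s * z := by
        intro t ht
        have hmem : t ∈ ((S : Set G) * (Z : Set G)) := by
          rw [← Subgroup.mul_normal S Z]; exact ht
        obtain ⟨s, hs, z, hz, rfl⟩ := hmem
        exact ⟨s, hs, z, hz, rfl⟩
      have hZcen : ∀ z ∈ Z, ∀ g : G, Commute z g := fun z hz g =>
        (Subgroup.mem_center_iff.mp hz g).symm
      have hcommS : ∀ t₁ t₂ : ↥T, ⁅t₁, t₂⁆ ∈ S' := by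
        intro t₁ t₂
        rw [hS'def, Subgroup.mem_subgroupOf]
        have hco : ((⁅t₁, t₂⁆ : ↥T) : G) = ⁅(t₁ : G), (t₂ : G)⁆ := rfl
        rw [hco]
        obtain ⟨s₁, hs₁, z₁, hz₁, he₁⟩ := hdec _ t₁.2
        obtain ⟨s₂, hs₂, z₂, hz₂, he₂⟩ := hdec _ t₂.2
        rw [he₁, he₂, cc_right _ _ _ (hZcen z₂ hz₂), cc_left _ _ _ (hZcen z₁ hz₁)]
        show s₁ * s₂ * s₁⁻¹ * s₂⁻¹ ∈ S
        exact S.mul_mem (S.mul_mem (S.mul_mem hs₁ hs₂) (S.inv_mem hs₁)) (S.inv_mem hs₂)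
      haveI hS'norm : S'.Normal := by
        constructor
        intro n hn g
        have h1 : ⁅g, n⁆ ∈ S' := hcommS g n
        have : g * n * g⁻¹ = ⁅g, n⁆ * n := by group
        rw [this]
        exact S'.mul_mem h1 hn
      -- the quotient T ⧸ S' is a f.g. torsion commutative group, hence finite
      letI : CommGroup (↥T ⧸ S') :=
        { (inferInstance : Group (↥T ⧸ S')) with
          mul_comm := by
            intro a b
            obtain ⟨x, rfl⟩ := QuotientGroup.mk'_surjective S' a
            obtain ⟨y, rfl⟩ := QuotientGroup.mk'_surjective S' b
            show ((x * y : ↥T) : ↥T ⧸ S') = ((y * x : ↥T) : ↥T ⧸ S')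
            rw [QuotientGroup.eq]
            have : (x * y)⁻¹ * (y * x) = ⁅y⁻¹, x⁻¹⁆ := by group
            rw [this]
            exact hcommS _ _ }
      have htor : ∀ q : ↥T ⧸ S', IsOfFinOrder q := by
        intro q
        obtain ⟨x, rfl⟩ := QuotientGroup.mk'_surjective S' q
        obtain ⟨k, hk, hkS⟩ := hS (x : G)
        refine isOfFinOrder_iff_pow_eq_one.mpr ⟨k, hk, ?_⟩
        have hm : x ^ k ∈ S' := by
          rw [hS'def, Subgroup.mem_subgroupOf]
          exact_mod_cast hkS
        rw [← map_pow]
        exact (QuotientGroup.eq_one_iff _).mpr hm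
      haveI : Finite (↥T ⧸ S') := CommGroup.finite_of_fg_torsion _ htor
      have hidx : S'.index ≠ 0 := Subgroup.index_ne_zero_of_finite
      constructor
      rw [← Subgroup.relIndex_mul_index hle]
      exact Nat.mul_ne_zero hidx hfiT.index_ne_zero

section helpers
variable {M : Type*} [Group M]

lemma root_unique (hur : ∀ (m : M) (k : ℕ), 0 < k → ∃! x : M, x ^ k = m)
    {x y : M} {k : ℕ} (hk : 0 < k) (h : x ^ k = y ^ k) : x = y := by
  obtain ⟨r, _, hu⟩ := hur (y ^ k) k hk
  rw [hu x h, hu y rfl]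

lemma conj_pow'' (g x : M) (n : ℕ) : (g * x * g⁻¹) ^ n = g * x ^ n * g⁻¹ := by
  have := map_pow (MulAut.conj g).toMonoidHom x n
  simpa [MulAut.conj_apply] using this

lemma commute_of_pow_commute (hur : ∀ (m : M) (k : ℕ), 0 < k → ∃! x : M, x ^ k = m)
    {p q : M} {k l : ℕ} (hk : 0 < k) (hl : 0 < l)
    (h : Commute (p ^ k) (q ^ l)) : Commute p q := by
  have h1 : (q ^ l * p * (q ^ l)⁻¹) ^ k = p ^ k := by
    rw [conj_pow'', ← h.eq]; group
  have h2 : q ^ l * p * (q ^ l)⁻¹ = p := root_unique hur hk h1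
  have h3 : Commute (q ^ l) p := mul_inv_eq_iff_eq_mul.mp h2
  have h4 : (p * q * p⁻¹) ^ l = q ^ l := by
    rw [conj_pow'', h3.symm.eq]; group
  have h5 : p * q * p⁻¹ = q := root_unique hur hl h4
  exact mul_inv_eq_iff_eq_mul.mp h5

lemma eq_one_of_pow_eq_one' (htf : ∀ g : M, g ≠ 1 → ¬IsOfFinOrder g) {m : M} {k : ℕ}
    (hk : 0 < k) (h : m ^ k = 1) : m = 1 := by
  by_contra hne
  exact htf m hne (isOfFinOrder_iff_pow_eq_one.mpr ⟨k, hk, h⟩)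

lemma exists_pow_mem_fi {G : Type*} [Group G] (H : Subgroup G) [H.FiniteIndex] (g : G) :
    ∃ k : ℕ, 0 < k ∧ g ^ k ∈ H := by
  haveI : Finite (G ⧸ H) := H.finite_quotient_of_finiteIndex
  obtain ⟨i, j, hij, hfe⟩ := Finite.exists_ne_map_eq_of_infinite
    (fun n : ℕ => ((g ^ n : G) : G ⧸ H))
  rcases Nat.lt_or_ge i j with hlt | hge
  · refine ⟨j - i, by omega, ?_⟩
    have := QuotientGroup.eq.mp hfe
    rwa [show (g ^ i)⁻¹ * g ^ j = g ^ (j - i) by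
      rw [← pow_sub_mul_pow g (Nat.le_of_lt hlt)]; group] at this
  · have hlt : j < i := by omega
    refine ⟨i - j, by omega, ?_⟩
    have := QuotientGroup.eq.mp hfe.symm
    rwa [show (g ^ j)⁻¹ * g ^ i = g ^ (i - j) by
      rw [← pow_sub_mul_pow g (Nat.le_of_lt hlt)]; group] at this

end helpers

/-- The isolator of a subgroup of a nilpotent group: elements with a positive power
in the subgroup. This is a subgroup, by the master lemma. -/
def isolator {M : Type*} [Group M] [hnil : Group.IsNilpotent M] (P : Subgroup M) :
    Subgroup M where
  carrier := {m | ∃ k : ℕ, 0 < k ∧ m ^ k ∈ P}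
  one_mem' := ⟨1, one_pos, by simpa using P.one_mem⟩
  inv_mem' := by
    rintro m ⟨k, hk, hmem⟩
    exact ⟨k, hk, by rw [inv_pow]; exact P.inv_mem hmem⟩
  mul_mem' := by
    rintro m₁ m₂ ⟨k₁, hk₁, hm₁⟩ ⟨k₂, hk₂, hm₂⟩
    set K₀ : Subgroup M := Subgroup.closure {m₁, m₂} with hK₀
    have hXtop : Subgroup.closure (K₀.subtype ⁻¹' {m₁, m₂}) = ⊤ :=
      Subgroup.closure_preimage_eq_top ({m₁, m₂} : Set M)
    have hgen : ∀ x ∈ (K₀.subtype ⁻¹' {m₁, m₂}),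
        ∃ a : ℕ, 0 < a ∧ x ^ a ∈ P.subgroupOf K₀ := by
      rintro x hx
      rcases hx with h | h
      · refine ⟨k₁, hk₁, ?_⟩
        rw [Subgroup.mem_subgroupOf]
        have hco : ((x ^ k₁ : ↥K₀) : M) = (x : M) ^ k₁ := rfl
        have hx1 : (x : M) = m₁ := h
        rw [hco, hx1]
        exact hm₁
      · refine ⟨k₂, hk₂, ?_⟩
        rw [Subgroup.mem_subgroupOf]
        have hco : ((x ^ k₂ : ↥K₀) : M) = (x : M) ^ k₂ := rfl
        have hx1 : (x : M) = m₂ := h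
        rw [hco, hx1]
        exact hm₂
    have hm12 : m₁ * m₂ ∈ K₀ :=
      K₀.mul_mem (Subgroup.subset_closure (by simp)) (Subgroup.subset_closure (by simp))
    obtain ⟨m, hm, hmS⟩ := master_aux (Group.nilpotencyClass ↥K₀) le_rfl
      (P.subgroupOf K₀) (K₀.subtype ⁻¹' {m₁, m₂}) hXtop hgen ⟨m₁ * m₂, hm12⟩
    rw [Subgroup.mem_subgroupOf] at hmS
    exact ⟨m, hm, by simpa using hmS⟩

lemma mem_isolator {M : Type*} [Group M] [Group.IsNilpotent M] {P : Subgroup M} {m : M} :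
    m ∈ isolator P ↔ ∃ k : ℕ, 0 < k ∧ m ^ k ∈ P := Iff.rfl


/-- A finitely generated torsion-free nilpotent group `N` is rationally indecomposable
(its rational Malcev completion is directly indecomposable) if and only if every finite
index subgroup of `N` is directly indecomposable. -/
theorem rationally_indecomposable_iff_finiteIndex_subgroups_indecomposable
    (N : Type u) (M : Type v) [Group N] [Group M]
    (hfg : Group.FG N) (htf : ∀ g : N, g ≠ 1 → ¬IsOfFinOrder g) [Group.IsNilpotent N]
    (ι : N →* M) (hι : IsRationalMalcevCompletion ι) :
    DirectlyIndecomposable M ↔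
      ∀ H : Subgroup N, H.FiniteIndex → DirectlyIndecomposable H := by
  haveI hMnil : Group.IsNilpotent M := hι.nilpotent
  haveI hNfg : Group.FG N := hfg
  constructor
  · intro hM Hs hHfi
    intro A B gA gB hne
    letI := gA
    letI := gB
    obtain ⟨e⟩ := hne
    haveI := hHfi
    set A' : Subgroup N := (Subgroup.comap e.toMonoidHom ((⊤ : Subgroup A).prod ⊥)).map Hs.subtype with hA'def
    set B' : Subgroup N := (Subgroup.comap e.toMonoidHom ((⊥ : Subgroup A).prod ⊤)).map Hs.subtype with hB'def
    have hmemcA : ∀ h : ↥Hs, h ∈ Subgroup.comap e.toMonoidHom ((⊤ : Subgroup A).prod ⊥) ↔ (e h).2 = 1 := by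
      intro h; simp [Subgroup.mem_comap, Subgroup.mem_prod, Subgroup.mem_bot]
    have hmemcB : ∀ h : ↥Hs, h ∈ Subgroup.comap e.toMonoidHom ((⊥ : Subgroup A).prod ⊤) ↔ (e h).1 = 1 := by
      intro h; simp [Subgroup.mem_comap, Subgroup.mem_prod, Subgroup.mem_bot]
    have hABcomm : ∀ a ∈ A', ∀ b ∈ B', a * b = b * a := by
      intro a ha b hb
      rw [hA'def, Subgroup.mem_map] at ha
      obtain ⟨h₁, hh₁, rfl⟩ := ha
      rw [hB'def, Subgroup.mem_map] at hb
      obtain ⟨h₂, hh₂, rfl⟩ := hb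
      rw [hmemcA] at hh₁
      rw [hmemcB] at hh₂
      have key : e h₁ * e h₂ = e h₂ * e h₁ := by
        apply Prod.ext <;> simp [Prod.fst_mul, Prod.snd_mul, hh₁, hh₂]
      have hcm : h₁ * h₂ = h₂ * h₁ := e.injective (by rw [map_mul, map_mul, key])
      calc Hs.subtype h₁ * Hs.subtype h₂ = Hs.subtype (h₁ * h₂) := (map_mul _ _ _).symm
        _ = Hs.subtype (h₂ * h₁) := by rw [hcm]
        _ = Hs.subtype h₂ * Hs.subtype h₁ := map_mul _ _ _
    have hABdisj : ∀ n : N, n ∈ A' → n ∈ B' → n = 1 := by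
      intro n ha hb
      rw [hA'def, Subgroup.mem_map] at ha
      obtain ⟨h₁, hh₁, rfl⟩ := ha
      rw [hB'def, Subgroup.mem_map] at hb
      obtain ⟨h₂, hh₂, hco⟩ := hb
      have hcoe : h₂ = h₁ := Subtype.ext hco
      rw [hmemcA] at hh₁
      rw [hmemcB] at hh₂
      rw [hcoe] at hh₂
      have he1 : e h₁ = 1 := by
        have hsplit : e h₁ = ((e h₁).1, (e h₁).2) := rfl
        rw [hsplit, hh₁, hh₂]
        rfl
      have h11 : h₁ = 1 := e.injective (by rw [he1, map_one])
      rw [h11, map_one]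
    have hdecH : ∀ h : ↥Hs, ∃ a ∈ A', ∃ b ∈ B', (h : N) = a * b := by
      intro h
      have hmul : e.symm ((e h).1, 1) * e.symm (1, (e h).2) = h := by
        rw [← map_mul]
        have hp : ((e h).1, (1 : B)) * ((1 : A), (e h).2) = e h := by
          simp [Prod.mk_mul_mk]
        rw [hp, MulEquiv.symm_apply_apply]
      refine ⟨(e.symm ((e h).1, 1) : ↥Hs), ?_, (e.symm (1, (e h).2) : ↥Hs), ?_, ?_⟩
      · rw [hA'def]
        exact Subgroup.mem_map_of_mem _ ((hmemcA _).mpr (by rw [MulEquiv.apply_symm_apply]))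
      · rw [hB'def]
        exact Subgroup.mem_map_of_mem _ ((hmemcB _).mpr (by rw [MulEquiv.apply_symm_apply]))
      · conv_lhs => rw [← hmul]
        rfl
    set IA : Subgroup M := isolator (A'.map ι) with hIAdef
    set IB : Subgroup M := isolator (B'.map ι) with hIBdef
    have hIcomm : ∀ x ∈ IA, ∀ y ∈ IB, Commute x y := by
      intro x hx y hy
      obtain ⟨k, hk, hxk⟩ := mem_isolator.mp hx
      obtain ⟨l, hl, hyl⟩ := mem_isolator.mp hy
      rw [Subgroup.mem_map] at hxk hyl
      obtain ⟨a, haA, hax⟩ := hxk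
      obtain ⟨b, hbB, hby⟩ := hyl
      have hcab : Commute (ι a) (ι b) := by
        show ι a * ι b = ι b * ι a
        rw [← map_mul, ← map_mul, hABcomm a haA b hbB]
      apply commute_of_pow_commute hι.uniqueRoots hk hl
      rwa [hax, hby] at hcab
    have hIdisj : ∀ m : M, m ∈ IA → m ∈ IB → m = 1 := by
      intro m hma hmb
      obtain ⟨k, hk, hxk⟩ := mem_isolator.mp hma
      obtain ⟨l, hl, hyl⟩ := mem_isolator.mp hmb
      have h1 : m ^ (k * l) ∈ A'.map ι := by
        rw [pow_mul]; exact Subgroup.pow_mem _ hxk l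
      have h2 : m ^ (k * l) ∈ B'.map ι := by
        rw [mul_comm k l, pow_mul]; exact Subgroup.pow_mem _ hyl k
      rw [Subgroup.mem_map] at h1 h2
      obtain ⟨a, haA, hax⟩ := h1
      obtain ⟨b, hbB, hbx⟩ := h2
      have hab : a = b := hι.injective (by rw [hax, hbx])
      have ha1 : a = 1 := hABdisj a haA (by rw [hab]; exact hbB)
      have hm1 : m ^ (k * l) = 1 := by rw [← hax, ha1, map_one]
      exact eq_one_of_pow_eq_one' hι.torsionFree (Nat.mul_pos hk hl) hm1
    have hMdec : ∀ m : M, ∃ x ∈ IA, ∃ y ∈ IB, m = x * y := by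
      intro m
      obtain ⟨k, hk, n, hn⟩ := hι.cofinal m
      obtain ⟨j, hj, hjH⟩ := exists_pow_mem_fi Hs n
      have hkj : 0 < k * j := Nat.mul_pos hk hj
      have hmkj : m ^ (k * j) = ι (n ^ j) := by rw [pow_mul, ← hn, ← map_pow]
      obtain ⟨a, haA, b, hbB, hdec⟩ := hdecH ⟨n ^ j, hjH⟩
      have hdec' : n ^ j = a * b := hdec
      obtain ⟨x, hx, -⟩ := hι.uniqueRoots (ι a) (k * j) hkj
      obtain ⟨y, hy, -⟩ := hι.uniqueRoots (ι b) (k * j) hkj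
      have hcxy : Commute x y := by
        apply commute_of_pow_commute hι.uniqueRoots hkj hkj
        rw [hx, hy]
        show ι a * ι b = ι b * ι a
        rw [← map_mul, ← map_mul, hABcomm a haA b hbB]
      have hxy : (x * y) ^ (k * j) = m ^ (k * j) := by
        rw [hcxy.mul_pow, hx, hy, ← map_mul, hmkj, hdec']
      have hm : x * y = m := root_unique hι.uniqueRoots hkj hxy
      exact ⟨x, mem_isolator.mpr ⟨k * j, hkj, by rw [hx]; exact Subgroup.mem_map_of_mem ι haA⟩,
        y, mem_isolator.mpr ⟨k * j, hkj, by rw [hy]; exact Subgroup.mem_map_of_mem ι hbB⟩, hm.symm⟩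
    have hIcomm' : ∀ (x : ↥IA) (y : ↥IB), Commute (IA.subtype x) (IB.subtype y) :=
      fun x y => hIcomm x x.2 y y.2
    set ψ : (↥IA × ↥IB) →* M := (IA.subtype).noncommCoprod (IB.subtype) hIcomm' with hψdef
    have hψ : ∀ p : ↥IA × ↥IB, ψ p = (p.1 : M) * (p.2 : M) := fun p => rfl
    have hψbij : Function.Bijective ψ := by
      constructor
      · rintro ⟨a₁, b₁⟩ ⟨a₂, b₂⟩ hpq
        rw [hψ, hψ] at hpq
        simp only at hpq
        have h2 : (a₂ : M)⁻¹ * (a₁ : M) = (b₂ : M) * (b₁ : M)⁻¹ := by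
          have h3 := congrArg (fun x => ((a₂ : M))⁻¹ * x * ((b₁ : M))⁻¹) hpq
          simp only [mul_assoc, mul_inv_cancel_right, inv_mul_cancel_left] at h3
          rw [← mul_assoc] at h3
          simpa [mul_assoc] using h3
        have hmemA : (a₂ : M)⁻¹ * (a₁ : M) ∈ IA := IA.mul_mem (IA.inv_mem a₂.2) a₁.2
        have hmemB : (a₂ : M)⁻¹ * (a₁ : M) ∈ IB := by
          rw [h2]; exact IB.mul_mem b₂.2 (IB.inv_mem b₁.2)
        have h1 : (a₂ : M)⁻¹ * (a₁ : M) = 1 := hIdisj _ hmemA hmemB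
        have ha : a₁ = a₂ := by
          apply Subtype.ext
          exact (inv_mul_eq_one.mp h1).symm
        have hb : b₁ = b₂ := by
          apply Subtype.ext
          rw [h1] at h2
          exact (mul_inv_eq_one.mp h2.symm).symm
        rw [ha, hb]
      · intro m
        obtain ⟨x, hx, y, hy, rfl⟩ := hMdec m
        exact ⟨(⟨x, hx⟩, ⟨y, hy⟩), rfl⟩
    have hfin := hM ↥IA ↥IB inferInstance inferInstance ⟨(MulEquiv.ofBijective ψ hψbij).symm⟩
    have keyA : Subsingleton ↥IA → ∀ a : A, a = 1 := by
      intro hs a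
      set h₀ : ↥Hs := e.symm (a, 1) with hh₀
      have hmem : (h₀ : N) ∈ A' := by
        rw [hA'def]
        exact Subgroup.mem_map_of_mem _ ((hmemcA h₀).mpr
          (by show (e (e.symm (a, 1))).2 = 1; rw [MulEquiv.apply_symm_apply]))
      have hIn : ι (h₀ : N) ∈ IA := mem_isolator.mpr
        ⟨1, one_pos, by rw [pow_one]; exact Subgroup.mem_map_of_mem ι hmem⟩
      have h1 : (⟨ι (h₀ : N), hIn⟩ : ↥IA) = 1 := Subsingleton.elim _ _
      have h2 : ι (h₀ : N) = 1 := congrArg Subtype.val h1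
      have h3 : (h₀ : N) = 1 := hι.injective (by rw [h2, map_one])
      have h4 : h₀ = 1 := Subtype.ext h3
      have h5 : (a, (1 : B)) = ((1 : A), (1 : B)) := by
        have h6 := congrArg e h4
        rwa [hh₀, MulEquiv.apply_symm_apply, map_one] at h6
      exact (Prod.ext_iff.mp h5).1
    have keyB : Subsingleton ↥IB → ∀ b : B, b = 1 := by
      intro hs b
      set h₀ : ↥Hs := e.symm (1, b) with hh₀
      have hmem : (h₀ : N) ∈ B' := by
        rw [hB'def]
        exact Subgroup.mem_map_of_mem _ ((hmemcB h₀).mpr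
          (by show (e (e.symm (1, b))).1 = 1; rw [MulEquiv.apply_symm_apply]))
      have hIn : ι (h₀ : N) ∈ IB := mem_isolator.mpr
        ⟨1, one_pos, by rw [pow_one]; exact Subgroup.mem_map_of_mem ι hmem⟩
      have h1 : (⟨ι (h₀ : N), hIn⟩ : ↥IB) = 1 := Subsingleton.elim _ _
      have h2 : ι (h₀ : N) = 1 := congrArg Subtype.val h1
      have h3 : (h₀ : N) = 1 := hι.injective (by rw [h2, map_one])
      have h4 : h₀ = 1 := Subtype.ext h3
      have h5 : ((1 : A), b) = ((1 : A), (1 : B)) := by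
        have h6 := congrArg e h4
        rwa [hh₀, MulEquiv.apply_symm_apply, map_one] at h6
      exact (Prod.ext_iff.mp h5).2
    rcases hfin with h | h
    · exact Or.inl ⟨fun a b => by rw [keyA h a, keyA h b]⟩
    · exact Or.inr ⟨fun a b => by rw [keyB h a, keyB h b]⟩
  · intro hsub
    intro Hv Kv gH gK hne
    obtain ⟨e⟩ := hne
    set PH : Subgroup M := Subgroup.comap e.toMonoidHom ((⊤ : Subgroup Hv).prod ⊥) with hPH
    set PK : Subgroup M := Subgroup.comap e.toMonoidHom ((⊥ : Subgroup Hv).prod ⊤) with hPK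
    have hmemPH : ∀ m : M, m ∈ PH ↔ (e m).2 = 1 := by
      intro m
      rw [hPH]
      simp [Subgroup.mem_comap, Subgroup.mem_prod, Subgroup.mem_bot]
    have hmemPK : ∀ m : M, m ∈ PK ↔ (e m).1 = 1 := by
      intro m
      rw [hPK]
      simp [Subgroup.mem_comap, Subgroup.mem_prod, Subgroup.mem_bot]
    set NH : Subgroup N := PH.comap ι with hNH
    set NK : Subgroup N := PK.comap ι with hNKdef
    have hcomm : ∀ a ∈ NH, ∀ b ∈ NK, a * b = b * a := by
      intro a ha b hb
      have h2 : (e (ι a)).2 = 1 := (hmemPH _).mp ha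
      have h1 : (e (ι b)).1 = 1 := (hmemPK _).mp hb
      have key : e (ι a) * e (ι b) = e (ι b) * e (ι a) := by
        apply Prod.ext <;> simp [Prod.fst_mul, Prod.snd_mul, h1, h2]
      have : ι (a * b) = ι (b * a) := e.injective (by rw [map_mul, map_mul, map_mul, map_mul, key])
      exact hι.injective this
    have hdisj : ∀ n : N, n ∈ NH → n ∈ NK → n = 1 := by
      intro n h1 h2
      have he : e (ι n) = 1 := by
        have : e (ι n) = ((e (ι n)).1, (e (ι n)).2) := rfl
        rw [this, (hmemPK _).mp h2, (hmemPH _).mp h1]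
        rfl
      apply hι.injective
      rw [map_one]
      exact e.injective (by rw [he, map_one])
    have hpow : ∀ n : N, ∃ k : ℕ, 0 < k ∧ n ^ k ∈ NH ⊔ NK := by
      intro n
      set mh := e.symm ((e (ι n)).1, 1) with hmh
      set mk2 := e.symm (1, (e (ι n)).2) with hmk2
      have hsplit : ι n = mh * mk2 := by
        rw [hmh, hmk2, ← map_mul]
        have : ((e (ι n)).1, (1 : Kv)) * ((1 : Hv), (e (ι n)).2) = e (ι n) := by
          simp [Prod.mk_mul_mk]
        rw [this, MulEquiv.symm_apply_apply]
      obtain ⟨ka, hka, na, hna⟩ := hι.cofinal mh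
      obtain ⟨kb, hkb, nb, hnb⟩ := hι.cofinal mk2
      have hnaNH : na ∈ NH := by
        have hena : e (ι na) = ((e (ι n)).1 ^ ka, 1) := by
          rw [hna, map_pow, hmh, MulEquiv.apply_symm_apply, Prod.pow_mk, one_pow]
        rw [hNH, Subgroup.mem_comap]
        apply (hmemPH _).mpr
        rw [hena]
      have hnbNK : nb ∈ NK := by
        have henb : e (ι nb) = (1, (e (ι n)).2 ^ kb) := by
          rw [hnb, map_pow, hmk2, MulEquiv.apply_symm_apply, Prod.pow_mk, one_pow]
        rw [hNKdef, Subgroup.mem_comap]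
        apply (hmemPK _).mpr
        rw [henb]
      refine ⟨ka * kb, Nat.mul_pos hka hkb, ?_⟩
      have hcmk : mh * mk2 = mk2 * mh := by
        rw [hmh, hmk2, ← map_mul, ← map_mul]
        congr 1
        simp [Prod.mk_mul_mk]
      have hIm : ι (n ^ (ka * kb)) = ι (na ^ kb * nb ^ ka) := by
        rw [map_pow, hsplit, (Commute.mul_pow (hcmk) (ka * kb) : _)]
        rw [map_mul, map_pow, map_pow, hna, hnb, ← pow_mul, ← pow_mul]
        rw [mul_comm kb ka]
      have := hι.injective hIm
      rw [this]
      exact Subgroup.mul_mem _ (Subgroup.mem_sup_left (NH.pow_mem hnaNH kb))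
        (Subgroup.mem_sup_right (NK.pow_mem hnbNK ka))
    haveI hfiS : (NH ⊔ NK).FiniteIndex :=
      fi_aux (Group.nilpotencyClass N) le_rfl _ hpow
    have hind := hsub (NH ⊔ NK) hfiS
    have hcomm' : ∀ (a : ↥NH) (b : ↥NK), Commute (NH.subtype a) (NK.subtype b) :=
      fun a b => hcomm a a.2 b b.2
    set φ : (↥NH × ↥NK) →* N := (NH.subtype).noncommCoprod (NK.subtype) hcomm' with hφdef
    have hφ : ∀ p : ↥NH × ↥NK, φ p = (p.1 : N) * (p.2 : N) := fun p => rfl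
    have hφinj : Function.Injective φ := by
      rintro ⟨a₁, b₁⟩ ⟨a₂, b₂⟩ hpq
      rw [hφ, hφ] at hpq
      simp only at hpq
      have h2 : (a₂ : N)⁻¹ * (a₁ : N) = (b₂ : N) * (b₁ : N)⁻¹ := by
        have h3 := congrArg (fun x => ((a₂ : N))⁻¹ * x * ((b₁ : N))⁻¹) hpq
        simp only [mul_assoc, mul_inv_cancel_right, inv_mul_cancel_left] at h3
        rw [← mul_assoc] at h3
        simpa [mul_assoc] using h3
      have hmemH : (a₂ : N)⁻¹ * (a₁ : N) ∈ NH := NH.mul_mem (NH.inv_mem a₂.2) a₁.2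
      have hmemK : (a₂ : N)⁻¹ * (a₁ : N) ∈ NK := by
        rw [h2]; exact NK.mul_mem b₂.2 (NK.inv_mem b₁.2)
      have h1 : (a₂ : N)⁻¹ * (a₁ : N) = 1 := hdisj _ hmemH hmemK
      have ha : a₁ = a₂ := by
        apply Subtype.ext
        have := inv_mul_eq_one.mp h1
        exact this.symm
      have hb : b₁ = b₂ := by
        apply Subtype.ext
        rw [h1] at h2
        have := (mul_inv_eq_one.mp h2.symm)
        exact this.symm
      rw [ha, hb]
    have hφrange : φ.range = NH ⊔ NK := by
      apply le_antisymm
      · rintro x ⟨⟨a, b⟩, rfl⟩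
        rw [hφ]
        exact Subgroup.mul_mem _ (Subgroup.mem_sup_left a.2) (Subgroup.mem_sup_right b.2)
      · rw [sup_le_iff]
        constructor
        · intro x hx
          exact ⟨(⟨x, hx⟩, 1), by rw [hφ]; simp⟩
        · intro x hx
          exact ⟨(1, ⟨x, hx⟩), by rw [hφ]; simp⟩
    have e1 : (↥NH × ↥NK) ≃* φ.range := MonoidHom.ofInjective hφinj
    have e2 : ↥(φ.range) ≃* ↥(NH ⊔ NK) := MulEquiv.subgroupCongr hφrange
    have hS := hind ↥NH ↥NK inferInstance inferInstance ⟨(e1.trans e2).symm⟩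
    have keyH : Subsingleton ↥NH → ∀ a : Hv, a = 1 := by
      intro hA a
      set m := e.symm (a, 1) with hm
      obtain ⟨k, hk, n, hn⟩ := hι.cofinal m
      have hmPH : m ^ k ∈ PH := by
        apply (hmemPH _).mpr
        rw [map_pow, hm, MulEquiv.apply_symm_apply, Prod.pow_mk, one_pow]
      have hnNH : n ∈ NH := by
        rw [hNH, Subgroup.mem_comap, hn]
        exact hmPH
      have hsub1 : (⟨n, hnNH⟩ : ↥NH) = 1 := Subsingleton.elim _ _
      have hn1 : n = 1 := congrArg Subtype.val hsub1
      have hmk : m ^ k = 1 := by rw [← hn, hn1, map_one]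
      have hm1 : m = 1 := eq_one_of_pow_eq_one' hι.torsionFree hk hmk
      have hpair : (a, (1 : Kv)) = ((1 : Hv), (1 : Kv)) := by
        have := congrArg e (hm1 : m = 1)
        rw [hm, MulEquiv.apply_symm_apply, map_one] at this
        exact this
      exact (Prod.ext_iff.mp hpair).1
    have keyK : Subsingleton ↥NK → ∀ b : Kv, b = 1 := by
      intro hB b
      set m := e.symm (1, b) with hm
      obtain ⟨k, hk, n, hn⟩ := hι.cofinal m
      have hmPK : m ^ k ∈ PK := by
        apply (hmemPK _).mpr
        rw [map_pow, hm, MulEquiv.apply_symm_apply, Prod.pow_mk, one_pow]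
      have hnNK : n ∈ NK := by
        rw [hNKdef, Subgroup.mem_comap, hn]
        exact hmPK
      have hsub1 : (⟨n, hnNK⟩ : ↥NK) = 1 := Subsingleton.elim _ _
      have hn1 : n = 1 := congrArg Subtype.val hsub1
      have hmk : m ^ k = 1 := by rw [← hn, hn1, map_one]
      have hm1 : m = 1 := eq_one_of_pow_eq_one' hι.torsionFree hk hmk
      have hpair : ((1 : Hv), b) = ((1 : Hv), (1 : Kv)) := by
        have := congrArg e (hm1 : m = 1)
        rw [hm, MulEquiv.apply_symm_apply, map_one] at this
        exact this
      exact (Prod.ext_iff.mp hpair).2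
    rcases hS with hA | hB
    · exact Or.inl ⟨fun a b => by rw [keyH hA a, keyH hA b]⟩
    · exact Or.inr ⟨fun a b => by rw [keyK hB a, keyK hB b]⟩
end

section
/- Let N be a finitely generated torsion-free nilpotent group and K ⊴ N a normal subgroup with N/K torsion-free. Then the rational Malcev completion of N/K is isomorphic to N^ℚ / K^ℚ, where K^ℚ denotes the rational completion of K viewed as a (normal) subgroup of N^ℚ. -/
private lemma tf_pow_eq_one {G : Type*} [Group G] (htf : ∀ g : G, g ≠ 1 → ¬IsOfFinOrder g)
    {x : G} {n : ℕ} (hn : 0 < n) (h : x ^ n = 1) : x = 1 := by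
  by_contra hx
  exact htf x hx (isOfFinOrder_iff_pow_eq_one.mpr ⟨n, hn, h⟩)

/-- If `c = ⁅g, x⁆` commutes with `x`, then `⁅g, x^n⁆ = c^n`. -/
private lemma comm_pow_aux {G : Type*} [Group G] (g x : G)
    (h : Commute x (g * x * g⁻¹ * x⁻¹)) (n : ℕ) :
    g * x ^ n * g⁻¹ * (x ^ n)⁻¹ = (g * x * g⁻¹ * x⁻¹) ^ n := by
  induction n with
  | zero => simp
  | succ n ih =>
    set c := g * x * g⁻¹ * x⁻¹ with hc
    have key : g * x ^ (n + 1) * g⁻¹ * (x ^ (n + 1))⁻¹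
        = c * (x * (g * x ^ n * g⁻¹ * (x ^ n)⁻¹) * x⁻¹) := by
      rw [hc]; group
    have hcn : Commute x (c ^ n) := h.pow_right n
    rw [key, ih, pow_succ']
    rw [hcn.eq]
    group

/-- Mal'cev: in a torsion-free nilpotent group, if `x^n` is central then `x` is central. -/
private lemma center_isolated {G : Type*} [Group G] [Group.IsNilpotent G]
    (htf : ∀ g : G, g ≠ 1 → ¬IsOfFinOrder g) {x : G} {n : ℕ} (hn : 0 < n)
    (hx : x ^ n ∈ Subgroup.center G) : x ∈ Subgroup.center G := by
  rw [Subgroup.mem_center_iff]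
  intro g
  -- iterated commutators of g with x
  let c : ℕ → G := fun k => Nat.rec g (fun _ ck => ck * x * ck⁻¹ * x⁻¹) k
  have hcsucc : ∀ k, c (k + 1) = c k * x * (c k)⁻¹ * x⁻¹ := fun k => rfl
  -- each c k lies in the k-th lower central series term
  have hmem : ∀ k, c k ∈ (⊤ : Subgroup G).lowerCentralSeries k := by
    intro k
    induction k with
    | zero => exact Subgroup.mem_top _
    | succ k ih =>
      rw [hcsucc, lowerCentralSeries_succ]
      exact Subgroup.subset_closure ⟨c k, ih, x, Subgroup.mem_top x, rfl⟩
  -- key step: if c (k+1) = 1 then c k * x = x * c k for k ≥ 0, and then c k = 1 if k ≥ 1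
  have step : ∀ k, c (k + 2) = 1 → c (k + 1) = 1 := by
    intro k h2
    have h2' : c (k + 1) * x * (c (k + 1))⁻¹ * x⁻¹ = 1 := h2
    have hax : c (k + 1) * x = x * c (k + 1) := by
      have h3 : c (k + 1) * x * (x * c (k + 1))⁻¹ = 1 := by
        rw [← h2']; group
      exact mul_inv_eq_one.mp h3
    have hcomm : Commute x (c k * x * (c k)⁻¹ * x⁻¹) := hax.symm
    have hpow : c (k + 1) ^ n = 1 := by
      have e : c (k + 1) = c k * x * (c k)⁻¹ * x⁻¹ := rfl
      rw [e, ← comm_pow_aux (c k) x hcomm n]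
      have hcen := Subgroup.mem_center_iff.mp hx (c k)
      rw [hcen]
      group
    exact tf_pow_eq_one htf hn hpow
  -- descend from nilpotency
  have hchain : ∀ k, c (k + 1) = 1 → c 1 = 1 := by
    intro k
    induction k with
    | zero => exact id
    | succ k ih => intro h; exact ih (step k h)
  have htop : c (Group.nilpotencyClass G + 1) = 1 := by
    have h1 : (⊤ : Subgroup G).lowerCentralSeries (Group.nilpotencyClass G + 1) = ⊥ := by
      rw [lowerCentralSeries_eq_bot_iff_nilpotencyClass_le]
      exact Nat.le_succ _
    have := hmem (Group.nilpotencyClass G + 1)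
    rw [h1] at this
    exact this
  have h1 : c 1 = 1 := hchain _ htop
  have : g * x * g⁻¹ * x⁻¹ = 1 := h1
  have := congrArg (· * x * g) this
  simpa [mul_assoc] using this

/-- Mal'cev: roots are unique in torsion-free nilpotent groups (auxiliary, by induction on
nilpotency class). -/
private lemma pow_left_injective_aux : ∀ (cl : ℕ) (G : Type*) [Group G]
    [Group.IsNilpotent G], Group.nilpotencyClass G ≤ cl → (∀ g : G, g ≠ 1 → ¬IsOfFinOrder g) →
    ∀ (x y : G) (n : ℕ), 0 < n → x ^ n = y ^ n → x = y := by
  intro cl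
  induction cl with
  | zero =>
    intro G _ _ hcl _ x y n _ _
    have : Subsingleton G := nilpotencyClass_zero_iff_subsingleton.mp (Nat.le_zero.mp hcl)
    exact Subsingleton.elim x y
  | succ cl ih =>
    intro G _ _ hcl htf x y n hn hxy
    -- the center quotient is torsion-free of smaller class
    have htfQ : ∀ g : G ⧸ Subgroup.center G, g ≠ 1 → ¬IsOfFinOrder g := by
      intro q hq hford
      obtain ⟨m, hm, hqm⟩ := isOfFinOrder_iff_pow_eq_one.mp hford
      obtain ⟨z, rfl⟩ := QuotientGroup.mk_surjective q
      rw [← QuotientGroup.mk_pow, QuotientGroup.eq_one_iff] at hqm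
      exact hq (QuotientGroup.eq_one_iff _ |>.mpr (center_isolated htf hm hqm))
    have hclQ : Group.nilpotencyClass (G ⧸ Subgroup.center G) ≤ cl := by
      rw [nilpotencyClass_quotient_center]
      omega
    have hq : (QuotientGroup.mk x : G ⧸ Subgroup.center G) = QuotientGroup.mk y := by
      apply ih _ hclQ htfQ _ _ n hn
      rw [← QuotientGroup.mk_pow, ← QuotientGroup.mk_pow, hxy]
    have hz : x⁻¹ * y ∈ Subgroup.center G := by
      rwa [QuotientGroup.eq] at hq
    set z := x⁻¹ * y with hzdef
    have hy : y = x * z := by rw [hzdef]; group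
    have hcomm : Commute x z := Subgroup.mem_center_iff.mp hz x
    have h1 : x ^ n = x ^ n * z ^ n := by
      conv_lhs => rw [hxy, hy, hcomm.mul_pow]
    have h2 : x ^ n * 1 = x ^ n * z ^ n := by rw [mul_one]; exact h1
    have hzn : z ^ n = 1 := (mul_left_cancel h2).symm
    have : z = 1 := tf_pow_eq_one htf hn hzn
    rw [hy, this, mul_one]

private lemma pow_left_injective' {G : Type*} [Group G] [Group.IsNilpotent G]
    (htf : ∀ g : G, g ≠ 1 → ¬IsOfFinOrder g) {x y : G} {n : ℕ} (hn : 0 < n)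
    (h : x ^ n = y ^ n) : x = y :=
  pow_left_injective_aux (Group.nilpotencyClass G) G le_rfl htf x y n hn h

/-- Let `K ⊴ N` with `N/K` torsion-free, and let `K^ℚ ⊴ N^ℚ` be the rational completion of
`K` inside `N^ℚ`. Then the induced map `N/K → N^ℚ/K^ℚ` realizes `N^ℚ/K^ℚ` as the rational
Malcev completion of `N/K`. -/
theorem malcev_completion_of_quotient (N M : Type*) [Group N] [Group M]
    (hfg : Group.FG N) (htf : ∀ g : N, g ≠ 1 → ¬IsOfFinOrder g) [Group.IsNilpotent N]
    (ι : N →* M) (hι : IsRationalMalcevCompletion ι)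
    (K : Subgroup N) [K.Normal] (htfq : ∀ g : N ⧸ K, g ≠ 1 → ¬IsOfFinOrder g)
    (KQ : Subgroup M) [KQ.Normal] (hle : K ≤ Subgroup.comap ι KQ)
    (hKQ : IsRationalMalcevCompletion
      (MonoidHom.codRestrict (ι.comp K.subtype) KQ (fun x => hle x.2))) :
    IsRationalMalcevCompletion (QuotientGroup.map K KQ ι hle) := by
  haveI hMnil : Group.IsNilpotent M := hι.nilpotent
  haveI hQnil : Group.IsNilpotent (M ⧸ KQ) :=
    nilpotent_of_surjective (QuotientGroup.mk' KQ) (QuotientGroup.mk'_surjective KQ)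
  -- KQ is closed under taking roots in M
  have hclosed : ∀ (x : M) (k : ℕ), 0 < k → x ^ k ∈ KQ → x ∈ KQ := by
    intro x k hk hxk
    obtain ⟨y, hy, -⟩ := hKQ.uniqueRoots ⟨x ^ k, hxk⟩ k hk
    have h1 : (y : M) ^ k = x ^ k := by
      have := congrArg (Subtype.val) hy
      simpa using this
    obtain ⟨r, hr, hru⟩ := hι.uniqueRoots (x ^ k) k hk
    have hxr : x = r := hru x rfl
    have hyr : (y : M) = r := hru (y : M) h1
    rw [hxr, ← hyr]
    exact y.2
  -- the quotient is torsion-free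
  have htfQ : ∀ g : M ⧸ KQ, g ≠ 1 → ¬IsOfFinOrder g := by
    intro q hq hford
    obtain ⟨j, hj, hjq⟩ := isOfFinOrder_iff_pow_eq_one.mp hford
    obtain ⟨m, rfl⟩ := QuotientGroup.mk_surjective q
    rw [← QuotientGroup.mk_pow, QuotientGroup.eq_one_iff] at hjq
    exact hq ((QuotientGroup.eq_one_iff m).mpr (hclosed m j hj hjq))
  constructor
  · exact hQnil
  · exact htfQ
  · -- injectivity
    rw [injective_iff_map_eq_one]
    intro a ha
    induction a using QuotientGroup.induction_on with
    | H n =>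
      rw [QuotientGroup.map_mk, QuotientGroup.eq_one_iff] at ha
      obtain ⟨k, hk, y, hy⟩ := hKQ.cofinal ⟨ι n, ha⟩
      have hval : ι (y : N) = ι n ^ k := by
        have := congrArg Subtype.val hy
        simp at this; exact this
      have hnk : (y : N) = n ^ k := hι.injective (by rw [hval, map_pow])
      have hmem : n ^ k ∈ K := hnk ▸ y.2
      have : (QuotientGroup.mk n : N ⧸ K) ^ k = 1 := by
        rw [← QuotientGroup.mk_pow, QuotientGroup.eq_one_iff]
        exact hmem
      exact tf_pow_eq_one htfq hk this
  · -- unique roots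
    intro q k hk
    obtain ⟨m, rfl⟩ := QuotientGroup.mk_surjective q
    obtain ⟨x, hx, -⟩ := hι.uniqueRoots m k hk
    refine ⟨QuotientGroup.mk x, ?_, ?_⟩
    · show (QuotientGroup.mk x : M ⧸ KQ) ^ k = QuotientGroup.mk m
      rw [← QuotientGroup.mk_pow, hx]
    · intro r hr
      have hr' : r ^ k = QuotientGroup.mk m := hr
      apply pow_left_injective' htfQ hk
      rw [hr', ← QuotientGroup.mk_pow, hx]
  · -- cofinality
    intro q
    obtain ⟨m, rfl⟩ := QuotientGroup.mk_surjective q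
    obtain ⟨k, hk, n, hn⟩ := hι.cofinal m
    refine ⟨k, hk, QuotientGroup.mk n, ?_⟩
    rw [QuotientGroup.map_mk, hn, QuotientGroup.mk_pow]
end

section
/- Let N₁, …, N_k be finitely generated torsion-free non-abelian nilpotent groups each of whose rational Malcev completion has no abelian direct factor, let N = N₁ × ⋯ × N_k, and let σ ∈ S_k. Suppose (φᵢⱼ) is a matrix of homomorphisms φᵢⱼ : Nⱼ → Nᵢ such that each φ_{i,σ(i)} is an isomorphism and im φᵢⱼ ≤ Z(Nᵢ) whenever j ≠ σ(i). Then the map N → N whose i-th component is ∏ⱼ φᵢⱼ ∘ πⱼ is an automorphism of N. -/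
/-- A group has no abelian direct factor if whenever it is isomorphic to `A × B` with `A`
abelian, `A` is trivial. -/
def NoAbelianDirectFactor (G : Type u) [Group G] : Prop :=
  ∀ (A B : Type u) (_ : Group A) (_ : Group B),
    Nonempty (G ≃* A × B) → (∀ a b : A, a * b = b * a) → Subsingleton A

namespace MalcevAux

open scoped commutatorElement

variable {G : Type*} [Group G]

/-- Lower central series of a subgroup `H`, as subgroups of the ambient group. -/
def lcsIn (H : Subgroup G) : ℕ → Subgroup G
  | 0 => H
  | n+1 => ⁅lcsIn H n, H⁆

theorem lcsIn_conj (H : Subgroup G) (n : ℕ) :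
    ∀ h ∈ H, ∀ x ∈ lcsIn H n, h * x * h⁻¹ ∈ lcsIn H n := by
  induction n with
  | zero => intro h hh x hx; exact H.mul_mem (H.mul_mem hh hx) (H.inv_mem hh)
  | succ n ih =>
    intro h hh x hx
    have : h * x * h⁻¹ ∈ (⁅lcsIn H n, H⁆ : Subgroup G).map (MulAut.conj h).toMonoidHom :=
      ⟨x, hx, by simp [MulAut.conj_apply, mul_assoc]⟩
    rw [Subgroup.map_commutator] at this
    refine Subgroup.commutator_mono ?_ ?_ this
    · rintro _ ⟨a, ha, rfl⟩
      simpa [MulAut.conj_apply, mul_assoc] using ih h hh a ha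
    · rintro _ ⟨a, ha, rfl⟩
      simpa [MulAut.conj_apply, mul_assoc] using H.mul_mem (H.mul_mem hh ha) (H.inv_mem hh)

theorem lcsIn_succ_le (H : Subgroup G) (n : ℕ) : lcsIn H (n+1) ≤ lcsIn H n := by
  show (⁅lcsIn H n, H⁆ : Subgroup G) ≤ lcsIn H n
  rw [Subgroup.commutator_le]
  intro p hp q hq
  have : p * (q * p⁻¹ * q⁻¹) ∈ lcsIn H n :=
    (lcsIn H n).mul_mem hp (lcsIn_conj H n q hq p⁻¹ ((lcsIn H n).inv_mem hp))
  simpa [commutatorElement_def, mul_assoc] using this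

theorem lcsIn_antitone (H : Subgroup G) : Antitone (lcsIn H) :=
  antitone_nat_of_succ_le (lcsIn_succ_le H)

theorem lcsIn_map {G' : Type*} [Group G'] (f : G →* G') (H : Subgroup G) (n : ℕ) :
    (lcsIn H n).map f = lcsIn (H.map f) n := by
  induction n with
  | zero => rfl
  | succ n ih => rw [lcsIn, lcsIn, Subgroup.map_commutator, ih]

theorem lcs_succ_comm (G : Type*) [Group G] (n : ℕ) :
    Subgroup.lowerCentralSeries (⊤ : Subgroup G) (n+1) = ⁅Subgroup.lowerCentralSeries (⊤ : Subgroup G) n, (⊤ : Subgroup G)⁆ := by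
  rfl

theorem map_lcs_eq {G' : Type*} [Group G'] (f : G →* G') (hf : Function.Surjective f) (n : ℕ) :
    (Subgroup.lowerCentralSeries (⊤ : Subgroup G) n).map f = Subgroup.lowerCentralSeries (⊤ : Subgroup G') n := by
  induction n with
  | zero =>
    simp only [lowerCentralSeries_zero]
    exact Subgroup.map_top_of_surjective f hf
  | succ n ih =>
    rw [lcs_succ_comm, lcs_succ_comm, Subgroup.map_commutator, ih,
      Subgroup.map_top_of_surjective f hf]

/-- commutator power identity under centrality assumptions -/
theorem comm_pow_eq (K : Subgroup G) (hK : ∀ w ∈ K, ∀ g x : G, Commute ⁅w, g⁆ x)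
    (v : G) (hv : v ∈ K) (g : G) (a b : ℕ) : ⁅v ^ a, g ^ b⁆ = ⁅v, g⁆ ^ (a * b) := by
  have A1 : ∀ (g' : G) (a : ℕ), ⁅v ^ a, g'⁆ = ⁅v, g'⁆ ^ a := by
    intro g' a
    induction a with
    | zero => simp
    | succ a ih =>
      have h1 : ⁅v * v ^ a, g'⁆ = v * ⁅v ^ a, g'⁆ * v⁻¹ * ⁅v, g'⁆ := by group
      have h2 : v * ⁅v ^ a, g'⁆ * v⁻¹ = ⁅v ^ a, g'⁆ := by
        have := (hK (v ^ a) (K.pow_mem hv a) g' v).symm.eq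
        rw [this, mul_assoc, mul_inv_cancel, mul_one]
      rw [pow_succ']
      rw [h1, h2, ih, ← pow_succ]
  have A2 : ∀ b : ℕ, ⁅v, g ^ b⁆ = ⁅v, g⁆ ^ b := by
    intro b
    induction b with
    | zero => simp
    | succ b ih =>
      have h1 : ⁅v, g * g ^ b⁆ = ⁅v, g⁆ * (g * ⁅v, g ^ b⁆ * g⁻¹) := by group
      have h2 : g * ⁅v, g ^ b⁆ * g⁻¹ = ⁅v, g ^ b⁆ := by
        have := (hK v hv (g ^ b) g).symm.eq
        rw [this, mul_assoc, mul_inv_cancel, mul_one]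
      rw [pow_succ']
      rw [h1, h2, ih, ← pow_succ']
  rw [A1 (g ^ b) a, A2 b, ← pow_mul, mul_comm b a]

theorem comm_central_mul_left {z h g : G} (hz : ∀ x : G, Commute z x) :
    ⁅z * h, g⁆ = ⁅h, g⁆ := by
  have h1 : ⁅z * h, g⁆ = z * ⁅h, g⁆ * z⁻¹ * ⁅z, g⁆ := by group
  have h2 : ⁅z, g⁆ = 1 := commutatorElement_eq_one_iff_commute.mpr (hz g)
  have h3 : z * ⁅h, g⁆ * z⁻¹ = ⁅h, g⁆ := by
    rw [(hz ⁅h, g⁆).eq, mul_assoc, mul_inv_cancel, mul_one]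
  rw [h1, h2, h3, mul_one]

/-- P. Hall's isolator theorem (the part we need): if `H` is a cofinal subgroup of a
nilpotent group `G`, then every element of the `i`-th lower central term of `G` has a
positive power in the `i`-th lower central term of `H`. -/
theorem isolator : ∀ (c : ℕ) (G : Type u) [instG : Group G],
    Subgroup.lowerCentralSeries (⊤ : Subgroup G) c = ⊥ →
    ∀ (H : Subgroup G), (∀ g : G, ∃ n : ℕ, 0 < n ∧ g ^ n ∈ H) →
    ∀ (i : ℕ), ∀ u ∈ Subgroup.lowerCentralSeries (⊤ : Subgroup G) i, ∃ n : ℕ, 0 < n ∧ u ^ n ∈ lcsIn H i := by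
  intro c
  induction c with
  | zero =>
    intro G _ hbot H _ i u _
    have hu1 : u = 1 := by
      have : u ∈ (⊥ : Subgroup G) := by
        rw [← hbot]; exact Subgroup.mem_top u
      simpa [Subgroup.mem_bot] using this
    exact ⟨1, one_pos, by simp [hu1, (lcsIn H i).one_mem]⟩
  | succ c IH =>
    intro G instG hc H hH i u hu
    rcases i with _ | i'
    · obtain ⟨n, hn, hun⟩ := hH u
      exact ⟨n, hn, hun⟩
    by_cases hci : c < i' + 1
    · have : Subgroup.lowerCentralSeries (⊤ : Subgroup G) (i' + 1) ≤ ⊥ := hc ▸ lowerCentralSeries_antitone _ (by omega)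
      have hu1 : u = 1 := by simpa [Subgroup.mem_bot] using this hu
      exact ⟨1, one_pos, by simp [hu1, (lcsIn H (i' + 1)).one_mem]⟩
    have hic : i' + 1 ≤ c := by omega
    -- the central bottom term
    have hZcentral : ∀ z ∈ Subgroup.lowerCentralSeries (⊤ : Subgroup G) c, ∀ g : G, Commute z g := by
      intro z hz g
      have : ⁅z, g⁆ ∈ Subgroup.lowerCentralSeries (⊤ : Subgroup G) (c + 1) := by
        rw [lcs_succ_comm]
        exact Subgroup.commutator_mem_commutator hz (Subgroup.mem_top g)
      rw [hc] at this
      exact commutatorElement_eq_one_iff_commute.mp (by simpa [Subgroup.mem_bot] using this)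
    set Z := Subgroup.lowerCentralSeries (⊤ : Subgroup G) c with hZdef
    let π := QuotientGroup.mk' Z
    have hπsurj : Function.Surjective π := QuotientGroup.mk'_surjective Z
    have hmap : ∀ n, (Subgroup.lowerCentralSeries (⊤ : Subgroup G) n).map π = Subgroup.lowerCentralSeries (⊤ : Subgroup (G ⧸ Z)) n :=
      map_lcs_eq π hπsurj
    have hcbar : Subgroup.lowerCentralSeries (⊤ : Subgroup (G ⧸ Z)) c = ⊥ := by
      rw [← hmap c]
      rw [Subgroup.map_eq_bot_iff, QuotientGroup.ker_mk']
    have hHbar : ∀ gb : G ⧸ Z, ∃ n : ℕ, 0 < n ∧ gb ^ n ∈ H.map π := by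
      intro gb
      obtain ⟨g, rfl⟩ := hπsurj gb
      obtain ⟨n, hn, hgn⟩ := hH g
      exact ⟨n, hn, by rw [← map_pow]; exact Subgroup.mem_map_of_mem π hgn⟩
    -- pull back from the quotient
    have pull : ∀ (jj : ℕ) (v : G), v ∈ Subgroup.lowerCentralSeries (⊤ : Subgroup G) jj →
        ∃ a : ℕ, 0 < a ∧ ∃ hh ∈ lcsIn H jj, ∃ zz ∈ Z, v ^ a = zz * hh := by
      intro jj v hv
      have hπv : π v ∈ Subgroup.lowerCentralSeries (⊤ : Subgroup (G ⧸ Z)) jj := by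
        rw [← hmap jj]; exact Subgroup.mem_map_of_mem π hv
      obtain ⟨a, ha, hma⟩ := IH (G ⧸ Z) hcbar (H.map π) hHbar jj (π v) hπv
      rw [← lcsIn_map π H jj] at hma
      obtain ⟨hh, hhh, heq⟩ := hma
      refine ⟨a, ha, hh, hhh, v ^ a * hh⁻¹, ?_, by group⟩
      have : π (v ^ a * hh⁻¹) = 1 := by
        rw [map_mul, map_inv, map_pow, heq]
        simp
      rwa [← QuotientGroup.ker_mk' Z, MonoidHom.mem_ker]
    -- the claim for the central bottom
    have claim : ∀ z ∈ Z, ∃ t : ℕ, 0 < t ∧ z ^ t ∈ lcsIn H c := by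
      obtain ⟨c', rfl⟩ : ∃ c', c = c' + 1 := ⟨c - 1, by omega⟩
      intro z hz
      rw [hZdef, lcs_succ_comm, Subgroup.commutator_def] at hz
      refine Subgroup.closure_induction
        (p := fun x _ => ∃ t : ℕ, 0 < t ∧ x ^ t ∈ lcsIn H (c' + 1)) ?_ ?_ ?_ ?_ hz
      · rintro x ⟨v, hv, g, -, rfl⟩
        obtain ⟨a, ha, hh, hhh, zz, hzz, hva⟩ := pull c' v hv
        obtain ⟨b, hb, hgb⟩ := hH g
        refine ⟨a * b, Nat.mul_pos ha hb, ?_⟩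
        have hcenK : ∀ w ∈ Subgroup.lowerCentralSeries (⊤ : Subgroup G) c', ∀ g' x : G, Commute ⁅w, g'⁆ x := by
          intro w hw g' x
          have : ⁅w, g'⁆ ∈ Subgroup.lowerCentralSeries (⊤ : Subgroup G) (c' + 1) := by
            rw [lcs_succ_comm]
            exact Subgroup.commutator_mem_commutator hw (Subgroup.mem_top g')
          exact hZcentral _ this x
        have h1 : ⁅v, g⁆ ^ (a * b) = ⁅v ^ a, g ^ b⁆ :=
          (comm_pow_eq (Subgroup.lowerCentralSeries (⊤ : Subgroup G) c') hcenK v hv g a b).symm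
        have h2 : ⁅v ^ a, g ^ b⁆ = ⁅hh, g ^ b⁆ := by
          rw [hva]
          exact comm_central_mul_left (fun x => hZcentral zz hzz x)
        rw [h1, h2]
        exact Subgroup.commutator_mem_commutator hhh hgb
      · exact ⟨1, one_pos, by simpa using (lcsIn H (c' + 1)).one_mem⟩
      · rintro x y hx hy ⟨t₁, ht₁, hxt⟩ ⟨t₂, ht₂, hyt⟩
        have hxZ : x ∈ Z := by
          rw [hZdef, lcs_succ_comm, Subgroup.commutator_def]; exact hx
        refine ⟨t₁ * t₂, Nat.mul_pos ht₁ ht₂, ?_⟩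
        have hcomm : Commute x y := hZcentral x hxZ y
        rw [hcomm.mul_pow]
        exact (lcsIn H (c' + 1)).mul_mem
          (by rw [pow_mul]; exact (lcsIn H (c' + 1)).pow_mem hxt t₂)
          (by rw [mul_comm t₁ t₂, pow_mul]; exact (lcsIn H (c' + 1)).pow_mem hyt t₁)
      · rintro x hx ⟨t, ht, hxt⟩
        exact ⟨t, ht, by rw [inv_pow]; exact (lcsIn H (c' + 1)).inv_mem hxt⟩
    -- finish
    obtain ⟨a, ha, hh, hhh, zz, hzz, hua⟩ := pull (i' + 1) u hu
    obtain ⟨t, ht, hzt⟩ := claim zz hzz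
    refine ⟨a * t, Nat.mul_pos ha ht, ?_⟩
    rw [pow_mul, hua, ((hZcentral zz hzz hh).mul_pow t)]
    exact (lcsIn H (i' + 1)).mul_mem
      ((lcsIn_antitone H hic) hzt)
      ((lcsIn H (i' + 1)).pow_mem hhh t)




theorem eq_one_of_pow_eq_one {M : Type*} [Group M] (htf : ∀ g : M, g ≠ 1 → ¬IsOfFinOrder g)
    {a : M} {n : ℕ} (hn : 0 < n) (h : a ^ n = 1) : a = 1 := by
  by_contra ha
  exact htf a ha (isOfFinOrder_iff_pow_eq_one.mpr ⟨n, hn, h⟩)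

variable {N M : Type*} [Group N] [Group M] {ι : N →* M}

theorem root_unique (h : IsRationalMalcevCompletion ι) {k : ℕ} (hk : 0 < k) {a b : M}
    (hab : a ^ k = b ^ k) : a = b := by
  obtain ⟨r, -, hr⟩ := h.uniqueRoots (b ^ k) k hk
  rw [hr a hab, hr b rfl]

theorem commute_of_commute_pow (h : IsRationalMalcevCompletion ι) {a m : M} {k : ℕ}
    (hk : 0 < k) (hc : Commute a (m ^ k)) : Commute a m := by
  have h1 : (a * m * a⁻¹) ^ k = m ^ k := by
    rw [conj_pow, hc.eq, mul_assoc]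
    simp
  have h2 : a * m * a⁻¹ = m := root_unique h hk h1
  have := congrArg (· * a) h2
  exact (by simpa [mul_assoc] using this : a * m = m * a)

theorem center_lift (h : IsRationalMalcevCompletion ι) {x : N}
    (hx : x ∈ Subgroup.center N) : ι x ∈ Subgroup.center M := by
  rw [Subgroup.mem_center_iff]
  intro m
  obtain ⟨k, hk, y, hy⟩ := h.cofinal m
  have hcp : Commute (ι x) (m ^ k) := by
    rw [← hy]
    show ι x * ι y = ι y * ι x
    rw [← map_mul, ← map_mul, (Subgroup.mem_center_iff.mp hx y).symm]
  exact (commute_of_commute_pow h hk hcp).symm.eq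




theorem central_pow_mem_commutator {N M : Type u} [Group N] [Group M] (ι : N →* M)
    (h : IsRationalMalcevCompletion ι) (hno : NoAbelianDirectFactor M)
    {x : N} (hx : x ∈ Subgroup.center N) :
    ∃ n : ℕ, 0 < n ∧ x ^ n ∈ commutator N := by
  by_contra hcon
  push_neg at hcon
  set m := ι x with hm
  have hm1 : m ≠ 1 := by
    intro h1
    have hx1 : x = 1 := h.injective (by rw [← hm, h1, map_one])
    exact hcon 1 one_pos (by rw [hx1, pow_one]; exact (commutator N).one_mem)
  have hmc : ∀ g : M, Commute m g := fun g =>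
    ((Subgroup.mem_center_iff.mp (center_lift h hx) g)).symm
  obtain ⟨c, hc⟩ := nilpotent_iff_lowerCentralSeries.mp h.nilpotent
  -- no nonzero power of `m` lies in the commutator subgroup of `M`
  have hkey : ∀ b : ℤ, b ≠ 0 → m ^ b ∉ commutator M := by
    intro b hb hmem
    have h1 : (m ^ b) ∈ Subgroup.lowerCentralSeries (⊤ : Subgroup M) 1 := by
      rw [lowerCentralSeries_one]; exact hmem
    obtain ⟨n, hn, hmn⟩ := isolator c M hc ι.range
      (fun g => h.cofinal g) 1 _ h1
    have hlcs1 : lcsIn ι.range 1 = (commutator N).map ι := by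
      show (⁅lcsIn ι.range 0, ι.range⁆ : Subgroup M) = _
      show (⁅ι.range, ι.range⁆ : Subgroup M) = _
      rw [_root_.commutator_def, Subgroup.map_commutator, ← MonoidHom.range_eq_map]
    rw [hlcs1] at hmn
    obtain ⟨w, hw, hweq⟩ := hmn
    have hxw : ι (x ^ (b * n)) = ι w := by
      rw [map_zpow, hweq, ← hm, ← zpow_natCast (m ^ b) n, ← zpow_mul]
    have hww : x ^ (b * n) = w := h.injective hxw
    have hmemN : x ^ (b * n) ∈ commutator N := hww ▸ hw
    have htpos : 0 < (b * n).natAbs := Int.natAbs_pos.mpr (by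
      exact mul_ne_zero hb (by exact_mod_cast hn.ne'))
    apply hcon (b * n).natAbs htpos
    have : x ^ ((b * n).natAbs : ℤ) ∈ commutator N := by
      rcases Int.natAbs_eq (b * n) with he | he
      · rw [← he]; exact hmemN
      · rw [eq_comm, neg_eq_iff_eq_neg] at he
        rw [he, zpow_neg]
        exact (commutator N).inv_mem hmemN
    rwa [zpow_natCast] at this
  -- the rational closure of ⟨m⟩
  have hPcentral : ∀ y : M, (∃ (a : ℕ) (b : ℤ), 0 < a ∧ y ^ a = m ^ b) →
      ∀ g : M, Commute y g := by
    rintro y ⟨a, b, ha, hab⟩ g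
    have hcb : g * m ^ b * g⁻¹ = m ^ b := by
      rw [((hmc g).zpow_left b).symm.eq, mul_assoc]
      simp
    have h1 : (g * y * g⁻¹) ^ a = y ^ a := by rw [conj_pow, hab, hcb]
    have h2 : g * y * g⁻¹ = y := root_unique h ha h1
    have := congrArg (· * g) h2
    simp only [inv_mul_cancel_right] at this
    exact this.symm
  let Q : Subgroup M :=
    { carrier := {y | ∃ (a : ℕ) (b : ℤ), 0 < a ∧ y ^ a = m ^ b}
      one_mem' := ⟨1, 0, one_pos, by simp⟩
      mul_mem' := by
        rintro y z ⟨a, b, ha, hab⟩ ⟨a', b', ha', hab'⟩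
        refine ⟨a * a', b * a' + b' * a, Nat.mul_pos ha ha', ?_⟩
        have hcomm : Commute y z := hPcentral y ⟨a, b, ha, hab⟩ z
        rw [hcomm.mul_pow]
        have hy : y ^ (a * a') = m ^ (b * a') := by
          rw [pow_mul, hab, ← zpow_natCast (m ^ b) a', ← zpow_mul]
        have hz : z ^ (a * a') = m ^ (b' * a) := by
          rw [mul_comm a a', pow_mul, hab', ← zpow_natCast (m ^ b') a, ← zpow_mul]
        rw [hy, hz, ← zpow_add]
      inv_mem' := by
        rintro y ⟨a, b, ha, hab⟩
        exact ⟨a, -b, ha, by rw [inv_pow, hab, zpow_neg]⟩ }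
  have hmQ : m ∈ Q := ⟨1, 1, one_pos, by simp⟩
  have hQcentral : ∀ q : M, q ∈ Q → ∀ g : M, Commute q g := fun q hq => hPcentral q hq
  have hQker : ∀ q ∈ Q, q ∈ commutator M → q = 1 := by
    rintro q ⟨a, b, ha, hab⟩ hqc
    rcases eq_or_ne b 0 with rfl | hb
    · exact eq_one_of_pow_eq_one h.torsionFree ha (by simpa using hab)
    · exact absurd (hab ▸ (commutator M).pow_mem hqc a) (hkey b hb)
  -- the abelianization
  let V := Abelianization M
  let π : M →* V := Abelianization.of
  have hπker : ∀ y : M, π y = 1 → y ∈ commutator M := fun y hy =>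
    (QuotientGroup.eq_one_iff y).mp hy
  -- commutative group structure on Q
  letI instCG : CommGroup ↥Q :=
    { Q.toGroup with
      mul_comm := fun a b => Subtype.ext ((hQcentral a.1 a.2 b.1).eq) }
  -- divisibility of Q
  have hdiv : ∀ (q : ↥Q) (n : ℤ), n ≠ 0 → ∃ r : ↥Q, r ^ n = q := by
    intro q n hn
    obtain ⟨r₀, hr₀⟩ := (h.uniqueRoots (q : M) n.natAbs (Int.natAbs_pos.mpr hn)).exists
    obtain ⟨a, b, ha, hab⟩ := q.2
    have hr₀Q : r₀ ∈ Q := ⟨n.natAbs * a, b, Nat.mul_pos (Int.natAbs_pos.mpr hn) ha,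
      by rw [pow_mul, hr₀]; exact hab⟩
    rcases lt_or_gt_of_ne hn with hneg | hpos
    · refine ⟨(⟨r₀, hr₀Q⟩ : ↥Q)⁻¹, ?_⟩
      apply Subtype.ext
      show ((⟨r₀, hr₀Q⟩ : ↥Q)⁻¹ ^ n : ↥Q).1 = (q : M)
      rw [← hr₀]
      push_cast
      rw [inv_zpow, ← zpow_neg, ← zpow_natCast r₀ n.natAbs]
      congr 1
      omega
    · refine ⟨⟨r₀, hr₀Q⟩, ?_⟩
      apply Subtype.ext
      show ((⟨r₀, hr₀Q⟩ : ↥Q) ^ n : ↥Q).1 = (q : M)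
      rw [← hr₀]
      push_cast
      rw [← zpow_natCast r₀ n.natAbs]
      congr 1
      omega
  letI instDiv : DivisibleBy (Additive ↥Q) ℤ :=
    { div := fun a n => if hn : n = 0 then 0 else Additive.ofMul (hdiv a.toMul n hn).choose
      div_zero := fun a => by simp
      div_cancel := fun {n} a hn => by
        simp only [dif_neg hn]
        have := (hdiv a.toMul n hn).choose_spec
        show n • Additive.ofMul _ = a
        rw [← ofMul_zpow, this]
        rfl }
  have baer : Module.Baer ℤ (Additive ↥Q) := Module.Baer.of_divisible _
  -- the image of Q in the abelianization
  let L : Subgroup V := Q.map π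
  have hinjQ : ∀ q q' : ↥Q, π (q : M) = π (q' : M) → q = q' := by
    intro q q' hqq
    have h1 : ((q : M) * (q' : M)⁻¹) ∈ commutator M := by
      apply hπker
      rw [map_mul, map_inv, hqq]
      simp
    have h2 : ((q : M) * (q' : M)⁻¹) = 1 :=
      hQker _ (Q.mul_mem q.2 (Q.inv_mem q'.2)) h1
    exact Subtype.ext (by rwa [mul_inv_eq_one] at h2)
  let e : ↥Q →* ↥L := (π.comp Q.subtype).codRestrict L (fun q => ⟨q, q.2, rfl⟩)
  have hebij : Function.Bijective e := by
    constructor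
    · intro q q' hqq
      exact hinjQ q q' (congrArg Subtype.val hqq)
    · rintro ⟨v, hq, hqQ, rfl⟩
      exact ⟨⟨hq, hqQ⟩, rfl⟩
  let E : ↥Q ≃* ↥L := MulEquiv.ofBijective e hebij
  let f : Additive ↥L →+ Additive V := MonoidHom.toAdditive L.subtype
  have hfinj : Function.Injective f := fun a b hab => Subtype.ext (by exact congrArg _root_.id hab)
  let g : Additive ↥L →+ Additive ↥Q := MonoidHom.toAdditive E.symm.toMonoidHom
  obtain ⟨ρ, hρ⟩ := baer.extension_property_addMonoidHom f hfinj g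
  let χ : M →* ↥Q := (MonoidHom.toAdditive.symm ρ).comp π
  have hχq : ∀ q : ↥Q, χ (q : M) = q := by
    intro q
    have h1 : π (q : M) = L.subtype (e q) := rfl
    show MonoidHom.toAdditive.symm ρ (π (q : M)) = q
    rw [h1]
    have h2 : ρ (f (Additive.ofMul (e q))) = g (Additive.ofMul (e q)) :=
      DFunLike.congr_fun hρ (Additive.ofMul (e q))
    have h3 : MonoidHom.toAdditive.symm ρ (L.subtype (e q)) =
        (ρ (Additive.ofMul (L.subtype (e q)))).toMul := rfl
    rw [h3]
    have h4 : f (Additive.ofMul (e q)) = Additive.ofMul (L.subtype (e q)) := rfl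
    rw [← h4, h2]
    show (E.symm (e q) : ↥Q) = q
    exact E.symm_apply_apply q
  -- the direct-product decomposition M ≃* Q × ker χ
  have hχcentral : ∀ (y : M) (g : M), Commute ((χ y : M)) g :=
    fun y g => hQcentral _ (χ y).2 g
  let Bk : Subgroup M := χ.ker
  let μ : M ≃* ↥Q × ↥Bk :=
    { toFun := fun y => (χ y, ⟨(χ y : M)⁻¹ * y, by
        show χ ((χ y : M)⁻¹ * y) = 1
        rw [map_mul, map_inv, hχq (χ y)]
        simp⟩)
      invFun := fun p => (p.1 : M) * (p.2 : M)
      left_inv := fun y => by simp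
      right_inv := fun p => by
        have hker : χ (p.2 : M) = 1 := p.2.2
        refine Prod.ext ?_ ?_
        · show χ ((p.1 : M) * (p.2 : M)) = p.1
          rw [map_mul, hχq p.1, hker, mul_one]
        · apply Subtype.ext
          show (χ ((p.1 : M) * (p.2 : M)) : M)⁻¹ * ((p.1 : M) * (p.2 : M)) = (p.2 : M)
          have : χ ((p.1 : M) * (p.2 : M)) = p.1 := by
            rw [map_mul, hχq p.1, hker, mul_one]
          rw [this, inv_mul_cancel_left]
      map_mul' := fun y z => by
        refine Prod.ext ?_ ?_
        · show χ (y * z) = χ y * χ z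
          exact map_mul χ y z
        · apply Subtype.ext
          show (χ (y * z) : M)⁻¹ * (y * z) = ((χ y : M)⁻¹ * y) * ((χ z : M)⁻¹ * z)
          rw [map_mul χ y z]
          push_cast
          rw [mul_inv_rev]
          have key : ∀ a w₁ w₂ : M, (∀ u : M, Commute a u) →
              a * (w₁ * w₂) = w₁ * (a * w₂) := fun a w₁ w₂ hc => by
            rw [← mul_assoc, (hc w₁).eq, mul_assoc]
          have hcz : ∀ w : M, Commute ((χ z : M))⁻¹ w := fun w => ((hχcentral z w).inv_left)
          simp only [mul_assoc]
          rw [key ((χ z : M))⁻¹ ((χ y : M))⁻¹ (y * z) hcz, key ((χ z : M))⁻¹ y z hcz] }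
  haveI hsub : Subsingleton ↥Q :=
    hno ↥Q ↥Bk inferInstance inferInstance ⟨μ⟩ (fun a b => mul_comm a b)
  exact hm1 (congrArg Subtype.val (Subsingleton.elim (⟨m, hmQ⟩ : ↥Q) ⟨1, Q.one_mem⟩))

theorem map_center_eq_one {Nj Ni Mj : Type u} [Group Nj] [Group Ni] [Group Mj]
    (ι : Nj →* Mj) (h : IsRationalMalcevCompletion ι) (hno : NoAbelianDirectFactor Mj)
    (htf : ∀ g : Ni, g ≠ 1 → ¬IsOfFinOrder g) (φ : Nj →* Ni) (hφ : φ.range ≤ Subgroup.center Ni)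
    {x : Nj} (hx : x ∈ Subgroup.center Nj) : φ x = 1 := by
  obtain ⟨n, hn, hxn⟩ := central_pow_mem_commutator ι h hno hx
  have h1 : φ (x ^ n) = 1 := by
    have hmem : φ (x ^ n) ∈ (commutator Nj).map φ := Subgroup.mem_map_of_mem φ hxn
    have hle : (commutator Nj).map φ ≤ ⊥ := by
      rw [_root_.commutator_def, Subgroup.map_commutator]
      rw [Subgroup.commutator_le]
      intro g₁ hg₁ g₂ hg₂
      rw [← MonoidHom.range_eq_map] at hg₁ hg₂
      have hc : Commute g₁ g₂ := (Subgroup.mem_center_iff.mp (hφ hg₁) g₂).symm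
      rw [Subgroup.mem_bot]
      exact commutatorElement_eq_one_iff_commute.mpr hc
    simpa [Subgroup.mem_bot] using hle hmem
  rw [map_pow] at h1
  exact eq_one_of_pow_eq_one htf hn h1

section ListLemmas

variable {G : Type*} [Group G] {ι : Type*}

theorem list_prod_mul_comm : ∀ (l : List ι), l.Nodup → ∀ (x y : ι → G),
    (∀ a ∈ l, ∀ b ∈ l, a ≠ b → Commute (x a) (y b)) →
    (l.map fun j => x j * y j).prod = (l.map x).prod * (l.map y).prod := by
  intro l
  induction l with
  | nil => intro _ x y _; simp
  | cons a l ih =>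
    intro hnd x y hcomm
    have hal : a ∉ l := (List.nodup_cons.mp hnd).1
    have hndl : l.Nodup := (List.nodup_cons.mp hnd).2
    have ihl := ih hndl x y (fun p hp q hq hpq =>
      hcomm p (List.mem_cons_of_mem a hp) q (List.mem_cons_of_mem a hq) hpq)
    simp only [List.map_cons, List.prod_cons]
    rw [ihl]
    have hya : Commute (y a) (l.map x).prod := by
      apply Commute.list_prod_right
      intro z hz
      obtain ⟨b, hb, rfl⟩ := List.mem_map.mp hz
      exact (hcomm b (List.mem_cons_of_mem a hb) a (List.mem_cons_self)
        (fun hba => hal (hba ▸ hb))).symm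
    calc x a * y a * ((l.map x).prod * (l.map y).prod)
        = x a * (y a * (l.map x).prod) * (l.map y).prod := by
          simp only [mul_assoc]
      _ = x a * ((l.map x).prod * y a) * (l.map y).prod := by rw [hya.eq]
      _ = x a * (l.map x).prod * (y a * (l.map y).prod) := by simp only [mul_assoc]

theorem list_prod_extract [DecidableEq ι] : ∀ (l : List ι), l.Nodup → ∀ (F : ι → G) (j₀ : ι),
    j₀ ∈ l → (∀ j ∈ l, j ≠ j₀ → F j ∈ Subgroup.center G) →
    (l.map F).prod = F j₀ * (l.map fun j => if j = j₀ then 1 else F j).prod := by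
  intro l
  induction l with
  | nil => intro _ _ _ habs; simp at habs
  | cons a l ih =>
    intro hnd F j₀ hj₀ hcen
    have hal : a ∉ l := (List.nodup_cons.mp hnd).1
    have hndl : l.Nodup := (List.nodup_cons.mp hnd).2
    simp only [List.map_cons, List.prod_cons]
    rcases eq_or_ne a j₀ with rfl | haj
    · have : (l.map fun j => if j = a then 1 else F j) = l.map F := by
        apply List.map_congr_left
        intro b hb
        exact if_neg (fun (hba : b = a) => hal (hba ▸ hb))
      rw [if_pos rfl, this, one_mul]
    · have hj₀l : j₀ ∈ l := by
        rcases List.mem_cons.mp hj₀ with h' | h'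
        · exact absurd h'.symm haj
        · exact h'
      have ihl := ih hndl F j₀ hj₀l (fun j hj hjj => hcen j (List.mem_cons_of_mem a hj) hjj)
      rw [if_neg haj, ihl]
      have hFa : F a ∈ Subgroup.center G := hcen a (List.mem_cons_self) haj
      have := Subgroup.mem_center_iff.mp hFa (F j₀)
      rw [← mul_assoc, ← this, mul_assoc]

theorem list_prod_single [DecidableEq ι] : ∀ (l : List ι), l.Nodup → ∀ (v : G) (j₀ : ι),
    j₀ ∈ l → (l.map fun j => if j = j₀ then v else 1).prod = v := by
  intro l
  induction l with
  | nil => intro _ _ _ habs; simp at habs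
  | cons a l ih =>
    intro hnd v j₀ hj₀
    have hal : a ∉ l := (List.nodup_cons.mp hnd).1
    have hndl : l.Nodup := (List.nodup_cons.mp hnd).2
    simp only [List.map_cons, List.prod_cons]
    rcases eq_or_ne a j₀ with rfl | haj
    · rw [if_pos rfl]
      have : (l.map fun j => if j = a then v else 1) = l.map fun _ => (1 : G) := by
        apply List.map_congr_left
        intro b hb
        exact if_neg (fun (hba : b = a) => hal (hba ▸ hb))
      rw [this]
      simp
    · have hj₀l : j₀ ∈ l := by
        rcases List.mem_cons.mp hj₀ with h' | h'
        · exact absurd h'.symm haj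
        · exact h'
      rw [if_neg haj, ih hndl v j₀ hj₀l, one_mul]

end ListLemmas

theorem center_reflect {G H : Type*} [Group G] [Group H] (f : G →* H)
    (hf : Function.Injective f) {x : G} (hx : f x ∈ Subgroup.center H) :
    x ∈ Subgroup.center G := by
  rw [Subgroup.mem_center_iff]
  intro y
  apply hf
  rw [map_mul, map_mul]
  exact Subgroup.mem_center_iff.mp hx (f y)

end MalcevAux


open MalcevAux in
/-- Let `N₁, …, N_k` be finitely generated torsion-free non-abelian nilpotent groups whose
rational Malcev completions have no abelian direct factor, `σ ∈ S_k`, and `(φᵢⱼ)` a matrix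
of homomorphisms `φᵢⱼ : Nⱼ → Nᵢ` such that each `φ_{i,σ(i)}` is an isomorphism and
`im φᵢⱼ ≤ Z(Nᵢ)` for `j ≠ σ(i)`. Then the map `N → N` whose `i`-th component is
`∏ⱼ φᵢⱼ(gⱼ)` is an automorphism of `N = N₁ × ⋯ × N_k`. -/
theorem matrix_with_iso_permutation_is_automorphism (k : ℕ) (N : Fin k → Type u)
    [∀ i, Group (N i)]
    (hfg : ∀ i, Group.FG (N i)) (htf : ∀ i, ∀ g : N i, g ≠ 1 → ¬IsOfFinOrder g)
    (hnilp : ∀ i, Group.IsNilpotent (N i))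
    (hnonab : ∀ i, ∃ a b : N i, a * b ≠ b * a)
    (M : Fin k → Type u) [∀ i, Group (M i)] (ι : ∀ i, N i →* M i)
    (hι : ∀ i, IsRationalMalcevCompletion (ι i))
    (hno : ∀ i, NoAbelianDirectFactor (M i))
    (σ : Equiv.Perm (Fin k)) (φ : ∀ i j : Fin k, N j →* N i)
    (hiso : ∀ i, Function.Bijective (φ i (σ i)))
    (hcent : ∀ i j, j ≠ σ i → MonoidHom.range (φ i j) ≤ Subgroup.center (N i)) :
    ∃ ψ : (∀ i, N i) ≃* (∀ i, N i),
      ∀ (g : ∀ i, N i) (i : Fin k),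
        ψ g i = ((List.finRange k).map (fun j => φ i j (g j))).prod := by
  classical
  -- the endomorphism
  let Ψ : (∀ i, N i) →* (∀ i, N i) :=
    { toFun := fun g i => ((List.finRange k).map (fun j => φ i j (g j))).prod
      map_one' := by
        funext i
        show ((List.finRange k).map (fun j => φ i j ((1 : ∀ i, N i) j))).prod = 1
        apply List.prod_eq_one
        intro z hz
        obtain ⟨j, hj, rfl⟩ := List.mem_map.mp hz
        simp
      map_mul' := fun g h' => by
        funext i
        show ((List.finRange k).map (fun j => φ i j ((g * h') j))).prod = _
        have hre : (List.finRange k).map (fun j => φ i j ((g * h') j)) =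
            (List.finRange k).map (fun j => φ i j (g j) * φ i j (h' j)) := by
          apply List.map_congr_left
          intro j _
          rw [Pi.mul_apply, map_mul]
        rw [hre]
        exact list_prod_mul_comm (List.finRange k) (List.nodup_finRange k)
          (fun j => φ i j (g j)) (fun j => φ i j (h' j))
          (fun a _ b _ hab => by
            by_cases hbs : b = σ i
            · have has : a ≠ σ i := fun h'' => hab (h'' ▸ hbs.symm ▸ rfl)
              have : φ i a (g a) ∈ Subgroup.center (N i) := hcent i a has ⟨g a, rfl⟩
              exact (Subgroup.mem_center_iff.mp this (φ i b (h' b))).symm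
            · have : φ i b (h' b) ∈ Subgroup.center (N i) := hcent i b hbs ⟨h' b, rfl⟩
              exact Subgroup.mem_center_iff.mp this (φ i a (g a))) }
  -- centrality of the "error terms"
  have hζcen : ∀ (g : ∀ i, N i) (i : Fin k),
      ((List.finRange k).map fun j => if j = σ i then 1 else φ i j (g j)).prod ∈
        Subgroup.center (N i) := by
    intro g i
    apply Subgroup.list_prod_mem
    intro z hz
    obtain ⟨j, hj, rfl⟩ := List.mem_map.mp hz
    by_cases hjs : j = σ i
    · rw [if_pos hjs]; exact (Subgroup.center (N i)).one_mem
    · rw [if_neg hjs]; exact hcent i j hjs ⟨g j, rfl⟩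
  have hextract : ∀ (g : ∀ i, N i) (i : Fin k),
      Ψ g i = φ i (σ i) (g (σ i)) *
        ((List.finRange k).map fun j => if j = σ i then 1 else φ i j (g j)).prod := by
    intro g i
    exact list_prod_extract (List.finRange k) (List.nodup_finRange k)
      (fun j => φ i j (g j)) (σ i) (List.mem_finRange _)
      (fun j _ hj => hcent i j hj ⟨g j, rfl⟩)
  -- injectivity
  have hker : ∀ g : ∀ i, N i, Ψ g = 1 → g = 1 := by
    intro g hg
    have hgi : ∀ i, Ψ g i = 1 := fun i => congrFun hg i
    have hcen : ∀ t, g t ∈ Subgroup.center (N t) := by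
      have hstep : ∀ i, g (σ i) ∈ Subgroup.center (N (σ i)) := by
        intro i
        have h2 : φ i (σ i) (g (σ i)) *
            ((List.finRange k).map fun j => if j = σ i then 1 else φ i j (g j)).prod = 1 := by
          rw [← hextract g i]; exact hgi i
        have h3 : φ i (σ i) (g (σ i)) ∈ Subgroup.center (N i) := by
          rw [eq_inv_of_mul_eq_one_left h2]
          exact (Subgroup.center (N i)).inv_mem (hζcen g i)
        exact center_reflect (φ i (σ i)) (hiso i).1 h3
      intro t
      have := hstep (σ.symm t)
      rwa [Equiv.apply_symm_apply] at this
    have hdiag : ∀ i, g (σ i) = 1 := by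
      intro i
      have hone : ((List.finRange k).map fun j =>
          if j = σ i then 1 else φ i j (g j)).prod = 1 := by
        apply List.prod_eq_one
        intro z hz
        obtain ⟨j, hj, rfl⟩ := List.mem_map.mp hz
        by_cases hjs : j = σ i
        · rw [if_pos hjs]
        · rw [if_neg hjs]
          exact map_center_eq_one (ι j) (hι j) (hno j) (htf i) (φ i j)
            (hcent i j hjs) (hcen j)
      have h2 := hgi i
      rw [hextract g i, hone, mul_one] at h2
      exact (hiso i).1 (by rw [h2, map_one])
    funext t
    have h4 := hdiag (σ.symm t)
    rw [Equiv.apply_symm_apply] at h4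
    rw [h4]
    rfl
  -- solving the "diagonal" equations
  let E : ∀ i, N (σ i) ≃* N i := fun i => MulEquiv.ofBijective (φ i (σ i)) (hiso i)
  let E' : (∀ j, N j) ≃ (∀ i, N (σ i)) := Equiv.piCongrLeft' N σ.symm
  have hfind : ∀ tg : ∀ i, N i, ∃ g : ∀ j, N j, ∀ i, g (σ i) = (E i).symm (tg i) := by
    intro tg
    refine ⟨E'.symm (fun i => (E i).symm (tg i)), ?_⟩
    intro i
    have h5 : E' (E'.symm (fun i => (E i).symm (tg i))) = fun i => (E i).symm (tg i) :=
      E'.apply_symm_apply _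
    exact congrFun h5 i
  -- surjectivity
  have hsurj : Function.Surjective Ψ := by
    intro target
    obtain ⟨g₀, hg₀⟩ := hfind target
    have hg₀' : ∀ i, φ i (σ i) (g₀ (σ i)) = target i := by
      intro i
      rw [hg₀ i]
      exact (E i).apply_symm_apply (target i)
    set ζ : ∀ i, N i := fun i =>
      ((List.finRange k).map fun j => if j = σ i then 1 else φ i j (g₀ j)).prod with hζ
    obtain ⟨w, hw⟩ := hfind (fun i => (ζ i)⁻¹)
    have hw' : ∀ i, φ i (σ i) (w (σ i)) = (ζ i)⁻¹ := by
      intro i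
      rw [hw i]
      exact (E i).apply_symm_apply _
    have hwcen : ∀ t, w t ∈ Subgroup.center (N t) := by
      have hstep : ∀ i, w (σ i) ∈ Subgroup.center (N (σ i)) := by
        intro i
        apply center_reflect (φ i (σ i)) (hiso i).1
        rw [hw' i]
        exact (Subgroup.center (N i)).inv_mem (hζcen g₀ i)
      intro t
      have := hstep (σ.symm t)
      rwa [Equiv.apply_symm_apply] at this
    refine ⟨g₀ * w, ?_⟩
    funext i
    have hΨw : Ψ w i = (ζ i)⁻¹ := by
      rw [hextract w i]
      have hone : ((List.finRange k).map fun j =>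
          if j = σ i then 1 else φ i j (w j)).prod = 1 := by
        apply List.prod_eq_one
        intro z hz
        obtain ⟨j, hj, rfl⟩ := List.mem_map.mp hz
        by_cases hjs : j = σ i
        · rw [if_pos hjs]
        · rw [if_neg hjs]
          exact map_center_eq_one (ι j) (hι j) (hno j) (htf i) (φ i j)
            (hcent i j hjs) (hwcen j)
      rw [hone, mul_one, hw' i]
    have hΨg₀ : Ψ g₀ i = target i * ζ i := by
      rw [hextract g₀ i, hg₀' i]
    have hmm : Ψ (g₀ * w) i = Ψ g₀ i * Ψ w i := by
      rw [map_mul]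
      rfl
    rw [hmm, hΨg₀, hΨw, mul_assoc, mul_inv_cancel, mul_one]
  exact ⟨MulEquiv.ofBijective Ψ ⟨(injective_iff_map_eq_one Ψ).mpr hker, hsurj⟩,
    fun g i => rfl⟩
end

section
/- For r, c ≥ 2, the free nilpotent group N_{r,c} of rank r and class c is rationally indecomposable: its rational Malcev completion does not split as a nontrivial direct product. -/
open scoped commutatorElement

/-! Auxiliary: the integral Heisenberg group (free class-2 model). -/

@[ext] structure Heis where
  x : ℤ
  y : ℤ
  z : ℤ

namespace Heis

instance : Mul Heis := ⟨fun g h => ⟨g.x + h.x, g.y + h.y, g.z + h.z + g.x * h.y⟩⟩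
instance : One Heis := ⟨⟨0, 0, 0⟩⟩
instance : Inv Heis := ⟨fun g => ⟨-g.x, -g.y, g.x * g.y - g.z⟩⟩

@[simp] lemma mul_x (g h : Heis) : (g * h).x = g.x + h.x := rfl
@[simp] lemma mul_y (g h : Heis) : (g * h).y = g.y + h.y := rfl
@[simp] lemma mul_z (g h : Heis) : (g * h).z = g.z + h.z + g.x * h.y := rfl
@[simp] lemma one_x : (1 : Heis).x = 0 := rfl
@[simp] lemma one_y : (1 : Heis).y = 0 := rfl
@[simp] lemma one_z : (1 : Heis).z = 0 := rfl
@[simp] lemma inv_x (g : Heis) : (g⁻¹).x = -g.x := rfl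
@[simp] lemma inv_y (g : Heis) : (g⁻¹).y = -g.y := rfl
@[simp] lemma inv_z (g : Heis) : (g⁻¹).z = g.x * g.y - g.z := rfl

instance : Group Heis where
  mul_assoc a b c := by ext <;> simp <;> ring
  one_mul a := by ext <;> simp
  mul_one a := by ext <;> simp
  inv_mul_cancel a := by ext <;> simp <;> ring

lemma commutator_apply (g h : Heis) :
    ⁅g, h⁆ = ⟨0, 0, g.x * h.y - h.x * g.y⟩ := by
  simp only [commutatorElement_def]
  ext <;> simp <;> ring

/-- The subgroup of elements with vanishing `x`,`y` coordinates (the center). -/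
def Zc : Subgroup Heis where
  carrier := {g | g.x = 0 ∧ g.y = 0}
  one_mem' := ⟨rfl, rfl⟩
  mul_mem' := by
    rintro a b ⟨ha1, ha2⟩ ⟨hb1, hb2⟩
    exact ⟨by simp [ha1, hb1], by simp [ha2, hb2]⟩
  inv_mem' := by
    rintro a ⟨h1, h2⟩
    exact ⟨by simp [h1], by simp [h2]⟩

lemma lcs_two : (⊤ : Subgroup Heis).lowerCentralSeries 2 = ⊥ := by
  have h1 : (⊤ : Subgroup Heis).lowerCentralSeries 1 ≤ Zc := by
    rw [Subgroup.top_lowerCentralSeries_one, commutator_def, Subgroup.commutator_le]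
    intro a _ b _
    rw [commutator_apply]
    exact ⟨rfl, rfl⟩
  rw [eq_bot_iff, Subgroup.lowerCentralSeries_succ]
  calc ⁅(⊤ : Subgroup Heis).lowerCentralSeries 1, (⊤ : Subgroup Heis)⁆
      ≤ ⁅Zc, (⊤ : Subgroup Heis)⁆ := Subgroup.commutator_mono h1 le_rfl
    _ ≤ ⊥ := by
        rw [Subgroup.commutator_le]
        intro a ha b _
        rw [Subgroup.mem_bot, commutator_apply]
        obtain ⟨h1, h2⟩ := ha
        ext <;> simp [h1, h2]

end Heis

/-! Auxiliary: a torsion-free nilpotent group all of whose elements have a positive power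
in the commutator subgroup is trivial. -/

section TorsionLemma

variable {G : Type*} [Group G]

/-- If all `⁅x, h⁆` are central, `g ↦ ⁅x, g⁆` is a homomorphism. -/
private def commHom (x : G) (hc : ∀ h g : G, ⁅x, h⁆ * g = g * ⁅x, h⁆) : G →* G where
  toFun g := ⁅x, g⁆
  map_one' := by simp
  map_mul' g h := by
    show ⁅x, g * h⁆ = ⁅x, g⁆ * ⁅x, h⁆
    have h1 : ⁅x, g * h⁆ = ⁅x, g⁆ * (g * ⁅x, h⁆ * g⁻¹) := by
      simp only [commutatorElement_def]
      group
    rw [h1, ← hc h g, mul_inv_cancel_right]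

lemma subsingleton_of_pow_mem_commutator
    (hnil : Group.IsNilpotent G)
    (htf : ∀ (g : G) (n : ℕ), 0 < n → g ^ n = 1 → g = 1)
    (hpow : ∀ g : G, ∃ n : ℕ, 0 < n ∧ g ^ n ∈ commutator G) :
    Subsingleton G := by
  obtain ⟨d, hd⟩ := Subgroup.nilpotent_iff_lowerCentralSeries.mp hnil
  suffices h : ∀ n, (⊤ : Subgroup G).lowerCentralSeries n = ⊥ → Subsingleton G from h d hd
  intro n
  induction n with
  | zero =>
    intro h
    refine ⟨fun a b => ?_⟩
    have ha : a ∈ (⊤ : Subgroup G).lowerCentralSeries 0 := by rw [Subgroup.lowerCentralSeries_zero]; trivial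
    have hb : b ∈ (⊤ : Subgroup G).lowerCentralSeries 0 := by rw [Subgroup.lowerCentralSeries_zero]; trivial
    rw [h, Subgroup.mem_bot] at ha hb
    rw [ha, hb]
  | succ n ih =>
    intro h
    rcases Nat.eq_zero_or_pos n with h0 | hpos
    · subst h0
      have key : ∀ g : G, g = 1 := by
        intro g
        obtain ⟨m, hm, hmem⟩ := hpow g
        have : g ^ m ∈ (⊤ : Subgroup G).lowerCentralSeries 1 := by
          rwa [Subgroup.top_lowerCentralSeries_one]
        rw [h, Subgroup.mem_bot] at this
        exact htf g m hm this
      exact ⟨fun a b => by rw [key a, key b]⟩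
    · apply ih
      obtain ⟨m, rfl⟩ := Nat.exists_eq_add_of_le hpos
      -- n = 1 + m; goal : (⊤ : Subgroup G).lowerCentralSeries (1 + m) = ⊥
      have central : ∀ y ∈ (⊤ : Subgroup G).lowerCentralSeries (1 + m), ∀ g : G, y * g = g * y := by
        intro y hy g
        have hmem : ⁅y, g⁆ ∈ (⊤ : Subgroup G).lowerCentralSeries (1 + m + 1) := by
          rw [Subgroup.lowerCentralSeries_succ]
          exact Subgroup.commutator_mem_commutator hy (Subgroup.mem_top g)
        rw [h, Subgroup.mem_bot] at hmem
        exact commutatorElement_eq_one_iff_commute.mp hmem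
      have hsucc : 1 + m = m + 1 := by omega
      have hdef : (⊤ : Subgroup G).lowerCentralSeries (m + 1) = ⁅(⊤ : Subgroup G).lowerCentralSeries m, ⊤⁆ := rfl
      rw [eq_bot_iff, hsucc, hdef, Subgroup.commutator_le]
      intro x hx g _
      rw [Subgroup.mem_bot]
      have hcx : ∀ h' g' : G, ⁅x, h'⁆ * g' = g' * ⁅x, h'⁆ := by
        intro h' g'
        refine central _ ?_ g'
        rw [hsucc, Subgroup.lowerCentralSeries_succ]
        exact Subgroup.commutator_mem_commutator hx (Subgroup.mem_top _)
      set f := commHom x hcx with hf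
      have hker : commutator G ≤ f.ker := by
        rw [commutator_def, Subgroup.commutator_le]
        intro a _ b _
        rw [MonoidHom.mem_ker, map_commutatorElement,
          commutatorElement_eq_one_iff_commute]
        exact (hcx b (f a)).symm
      obtain ⟨m', hm', hmem⟩ := hpow g
      have h1 : f (g ^ m') = 1 := hker hmem
      rw [map_pow] at h1
      exact htf _ m' hm' h1

end TorsionLemma

/-! Auxiliary: exponent-sum coordinates on free groups and the degree-2 Magnus argument. -/

section FreeGroupCoords

variable {r : ℕ}

/-- The exponent-sum homomorphism into `Fin r → Multiplicative ℤ`. -/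
def phiF (r : ℕ) : FreeGroup (Fin r) →* (Fin r → Multiplicative ℤ) :=
  FreeGroup.lift (fun b i => Multiplicative.ofAdd (if b = i then (1 : ℤ) else 0))

/-- The `i`-th exponent sum of a word. -/
def coordF (w : FreeGroup (Fin r)) (i : Fin r) : ℤ :=
  Multiplicative.toAdd (phiF r w i)

lemma coordF_mul (w₁ w₂ : FreeGroup (Fin r)) (i : Fin r) :
    coordF (w₁ * w₂) i = coordF w₁ i + coordF w₂ i := by
  simp [coordF, Pi.mul_apply]

lemma coordF_zpow (w : FreeGroup (Fin r)) (m : ℤ) (i : Fin r) :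
    coordF (w ^ m) i = m * coordF w i := by
  simp [coordF, map_zpow, Pi.pow_apply, toAdd_zpow, smul_eq_mul]

/-- A word with all exponent sums zero lies in the commutator subgroup. -/
lemma mem_commutator_of_coordF_eq_zero (w : FreeGroup (Fin r))
    (hw : ∀ i, coordF w i = 0) : w ∈ commutator (FreeGroup (Fin r)) := by
  classical
  set ab := (Abelianization.of :
    FreeGroup (Fin r) →* Abelianization (FreeGroup (Fin r))) with hab
  let g : (Fin r → Multiplicative ℤ) →* Abelianization (FreeGroup (Fin r)) :=
    { toFun := fun f => ∏ i, (ab (FreeGroup.of i)) ^ (Multiplicative.toAdd (f i))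
      map_one' := by simp
      map_mul' := by
        intro f₁ f₂
        have hterm : ∀ i : Fin r,
            ab (FreeGroup.of i) ^ (Multiplicative.toAdd ((f₁ * f₂) i))
              = ab (FreeGroup.of i) ^ (Multiplicative.toAdd (f₁ i)) *
                ab (FreeGroup.of i) ^ (Multiplicative.toAdd (f₂ i)) := by
          intro i
          rw [← zpow_add]
          rfl
        simp only [hterm]
        rw [Finset.prod_mul_distrib] }
  have key : g.comp (phiF r) = ab := by
    apply FreeGroup.ext_hom
    intro a
    rw [MonoidHom.comp_apply]
    show (∏ i, ab (FreeGroup.of i) ^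
        (Multiplicative.toAdd (phiF r (FreeGroup.of a) i))) = ab (FreeGroup.of a)
    have hval : ∀ i, Multiplicative.toAdd (phiF r (FreeGroup.of a) i)
        = (if a = i then (1 : ℤ) else 0) := by
      intro i
      simp [phiF]
    rw [Finset.prod_congr rfl (fun i _ => by rw [hval i])]
    rw [Finset.prod_eq_single a]
    · simp
    · intro b _ hb
      rw [if_neg (by exact fun hh => hb hh.symm), zpow_zero]
    · intro habs
      exact absurd (Finset.mem_univ a) habs
  have h1 : phiF r w = 1 := by
    funext i
    have := hw i
    rw [coordF] at this
    exact Multiplicative.toAdd.injective (by simpa using this)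
  have h2 : ab w = 1 := by
    have := congrArg (fun f => f w) key
    simp only [MonoidHom.comp_apply] at this
    rw [← this, h1, map_one]
  exact (QuotientGroup.eq_one_iff w).mp h2

/-- The Heisenberg test homomorphism for a pair of generators. -/
def psiF (r : ℕ) (i j : Fin r) : FreeGroup (Fin r) →* Heis :=
  FreeGroup.lift (fun b => if b = i then ⟨1, 0, 0⟩ else if b = j then ⟨0, 1, 0⟩ else 1)

def homX : Heis →* Multiplicative ℤ where
  toFun g := Multiplicative.ofAdd g.x
  map_one' := rfl
  map_mul' a b := rfl

def homY : Heis →* Multiplicative ℤ where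
  toFun g := Multiplicative.ofAdd g.y
  map_one' := rfl
  map_mul' a b := rfl

lemma psiF_x (i j : Fin r) (hij : i ≠ j) (w : FreeGroup (Fin r)) :
    (psiF r i j w).x = coordF w i := by
  have key : homX.comp (psiF r i j) = (Pi.evalMonoidHom _ i).comp (phiF r) := by
    apply FreeGroup.ext_hom
    intro a
    simp only [MonoidHom.comp_apply, psiF, phiF, FreeGroup.lift_apply_of, Pi.evalMonoidHom_apply]
    by_cases h1 : a = i
    · subst h1; simp [homX]
    · by_cases h2 : a = j
      · subst h2; simp [homX, h1, (Ne.symm hij : a ≠ i)]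
      · simp [homX, h1, h2]
  have := congrArg (fun f => f w) key
  simp only [MonoidHom.comp_apply, Pi.evalMonoidHom_apply] at this
  have := congrArg Multiplicative.toAdd this
  simpa [homX, coordF] using this

lemma psiF_y (i j : Fin r) (hij : i ≠ j) (w : FreeGroup (Fin r)) :
    (psiF r i j w).y = coordF w j := by
  have key : homY.comp (psiF r i j) = (Pi.evalMonoidHom _ j).comp (phiF r) := by
    apply FreeGroup.ext_hom
    intro a
    simp only [MonoidHom.comp_apply, psiF, phiF, FreeGroup.lift_apply_of, Pi.evalMonoidHom_apply]
    by_cases h1 : a = i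
    · subst h1; simp [homY, hij]
    · by_cases h2 : a = j
      · subst h2; simp [homY, h1]
      · simp [homY, h1, h2]
  have := congrArg (fun f => f w) key
  simp only [MonoidHom.comp_apply, Pi.evalMonoidHom_apply] at this
  have := congrArg Multiplicative.toAdd this
  simpa [homY, coordF] using this

/-- Degree-2 Magnus relation: commuting elements modulo `γ_c` (`c ≥ 2`) have
proportional exponent-sum vectors, pairwise. -/
lemma pair_relation {c : ℕ} (hc : 2 ≤ c) (w₁ w₂ : FreeGroup (Fin r))
    (h : ⁅w₁, w₂⁆ ∈ (⊤ : Subgroup (FreeGroup (Fin r))).lowerCentralSeries c) (i j : Fin r) :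
    coordF w₁ i * coordF w₂ j = coordF w₂ i * coordF w₁ j := by
  by_cases hij : i = j
  · subst hij; ring
  · have h2 : ⁅w₁, w₂⁆ ∈ (⊤ : Subgroup (FreeGroup (Fin r))).lowerCentralSeries 2 :=
      Subgroup.lowerCentralSeries_antitone _ hc h
    have h3 : psiF r i j ⁅w₁, w₂⁆ ∈ (⊤ : Subgroup Heis).lowerCentralSeries 2 :=
      Subgroup.lowerCentralSeries.map (psiF r i j) 2 (Subgroup.mem_map_of_mem _ h2)
    rw [Heis.lcs_two, Subgroup.mem_bot, map_commutatorElement,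
      Heis.commutator_apply] at h3
    have h4 := congrArg Heis.z h3
    simp only [Heis.one_z] at h4
    rw [psiF_x i j hij, psiF_y i j hij, psiF_x i j hij, psiF_y i j hij] at h4
    linarith

end FreeGroupCoords

/-- Pushing membership in the commutator subgroup through a homomorphism. -/
lemma hom_mem_commutator {G G' : Type*} [Group G] [Group G'] (f : G →* G') {x : G}
    (hx : x ∈ commutator G) : f x ∈ commutator G' := by
  have h1 := Subgroup.mem_map_of_mem f hx
  rw [commutator_def, Subgroup.map_commutator] at h1
  exact Subgroup.commutator_mono le_top le_top h1

lemma pow_natAbs_mem {G : Type*} [Group G] (S : Subgroup G) (x : G) (m : ℤ)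
    (h : x ^ m ∈ S) : x ^ m.natAbs ∈ S := by
  rcases le_or_gt 0 m with hm | hm
  · rw [← zpow_natCast]
    rwa [show ((m.natAbs : ℤ)) = m by omega]
  · rw [← zpow_natCast]
    have : x ^ ((m.natAbs : ℤ)) = (x ^ m)⁻¹ := by
      rw [← zpow_neg]
      congr 1
      omega
    rw [this]
    exact S.inv_mem h

/-- For `r, c ≥ 2`, the free nilpotent group `N_{r,c}` of rank `r` and class `c` (the
quotient of the free group of rank `r` by the `(c+1)`-st term of its lower central series,
which is `lowerCentralSeries _ c` in Mathlib's indexing) is rationally indecomposable: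
its rational Malcev completion is directly indecomposable. -/
theorem free_nilpotent_rationally_indecomposable (r c : ℕ) (hr : 2 ≤ r) (hc : 2 ≤ c)
    (M : Type*) [Group M]
    (ι : (FreeGroup (Fin r) ⧸ (⊤ : Subgroup (FreeGroup (Fin r))).lowerCentralSeries c) →* M)
    (hι : IsRationalMalcevCompletion ι) :
    DirectlyIndecomposable M := by
  classical
  intro H K gH gK he
  by_contra hcon
  push_neg at hcon
  obtain ⟨hH, hK⟩ := hcon
  obtain ⟨e⟩ := he
  set F := FreeGroup (Fin r) with hF
  let ι' : (F ⧸ (⊤ : Subgroup F).lowerCentralSeries c) →* H × K := e.toMonoidHom.comp ι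
  have injP : Function.Injective ι' := e.injective.comp hι.injective
  -- torsion-freeness of H × K, elementwise
  have tfP : ∀ (p : H × K) (n : ℕ), 0 < n → p ^ n = 1 → p = 1 := by
    intro p n hn hp
    by_contra hp1
    have h1 : e.symm p ≠ 1 := by
      intro hcontra
      apply hp1
      have := congrArg e hcontra
      simpa using this
    exact hι.torsionFree _ h1 (isOfFinOrder_iff_pow_eq_one.mpr
      ⟨n, hn, by rw [← map_pow, hp, map_one]⟩)
  -- cofinality in H × K
  have cofP : ∀ p : H × K, ∃ k : ℕ, 0 < k ∧ ∃ n, ι' n = p ^ k := by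
    intro p
    obtain ⟨k, hk, n, hn⟩ := hι.cofinal (e.symm p)
    refine ⟨k, hk, n, ?_⟩
    have : e ((e.symm p) ^ k) = p ^ k := by
      rw [map_pow]
      simp
    rw [← this, ← hn]
    rfl
  -- nilpotency
  haveI := hι.nilpotent
  haveI nilP : Group.IsNilpotent (H × K) :=
    nilpotent_of_surjective e.toMonoidHom e.surjective
  haveI nilH : Group.IsNilpotent H :=
    nilpotent_of_surjective (MonoidHom.fst H K) Prod.fst_surjective
  haveI nilK : Group.IsNilpotent K :=
    nilpotent_of_surjective (MonoidHom.snd H K) Prod.snd_surjective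
  -- in each factor there is an element no positive power of which is a commutator
  have caseGen : ∀ (L : Type _) (gL : Group L), Group.IsNilpotent L →
      (∀ (g : L) (n : ℕ), 0 < n → g ^ n = 1 → g = 1) → Nontrivial L →
      ∃ g₀ : L, ∀ n : ℕ, 0 < n → g₀ ^ n ∉ commutator L := by
    intro L gL hnil htf hnontriv
    by_contra hcase
    push_neg at hcase
    have : Subsingleton L := by
      refine subsingleton_of_pow_mem_commutator hnil htf ?_
      intro g
      obtain ⟨n, hn1, hn2⟩ := hcase g
      exact ⟨n, hn1, hn2⟩
    exact (not_subsingleton L) this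
  have tfH : ∀ (g : H) (n : ℕ), 0 < n → g ^ n = 1 → g = 1 := by
    intro g n hn hg
    have := tfP (g, 1) n hn (by rw [Prod.pow_mk, hg, one_pow]; rfl)
    exact congrArg Prod.fst this
  have tfK : ∀ (g : K) (n : ℕ), 0 < n → g ^ n = 1 → g = 1 := by
    intro g n hn hg
    have := tfP (1, g) n hn (by rw [Prod.pow_mk, hg, one_pow]; rfl)
    exact congrArg Prod.snd this
  obtain ⟨h₀, hh₀⟩ := caseGen H gH nilH tfH hH
  obtain ⟨k₀, hk₀⟩ := caseGen K gK nilK tfK hK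
  -- take positive powers landing in the image of the free nilpotent group
  obtain ⟨a, ha, u, hu⟩ := cofP (h₀, 1)
  obtain ⟨b, hb, v, hv⟩ := cofP (1, k₀)
  -- u and v commute
  have hcomm : ⁅u, v⁆ = 1 := by
    apply injP
    rw [map_commutatorElement, hu, hv, map_one,
      commutatorElement_eq_one_iff_commute]
    apply Commute.pow_pow
    show ((h₀, 1) : H × K) * (1, k₀) = (1, k₀) * (h₀, 1)
    simp [Prod.ext_iff]
  -- lift to the free group
  obtain ⟨w₁, hw₁⟩ := QuotientGroup.mk'_surjective ((⊤ : Subgroup F).lowerCentralSeries c) u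
  obtain ⟨w₂, hw₂⟩ := QuotientGroup.mk'_surjective ((⊤ : Subgroup F).lowerCentralSeries c) v
  have hlcs : ⁅w₁, w₂⁆ ∈ (⊤ : Subgroup F).lowerCentralSeries c := by
    have h1 : (QuotientGroup.mk' ((⊤ : Subgroup F).lowerCentralSeries c)) ⁅w₁, w₂⁆ = 1 := by
      rw [map_commutatorElement, hw₁, hw₂, hcomm]
    exact (QuotientGroup.eq_one_iff _).mp h1
  -- exponent-sum vectors
  set A : Fin r → ℤ := fun i => coordF w₁ i with hA
  set B : Fin r → ℤ := fun i => coordF w₂ i with hB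
  have hrel : ∀ i j, A i * B j = B i * A j := fun i j =>
    pair_relation hc w₁ w₂ hlcs i j
  -- a nontrivial integral dependence
  obtain ⟨p, q, hpq, hzero⟩ :
      ∃ p q : ℤ, (p ≠ 0 ∨ q ≠ 0) ∧ ∀ i, p * A i - q * B i = 0 := by
    by_cases hA0 : ∀ i, A i = 0
    · exact ⟨1, 0, Or.inl one_ne_zero, fun i => by simp [hA0 i]⟩
    · push_neg at hA0
      obtain ⟨i₀, hi₀⟩ := hA0
      refine ⟨B i₀, A i₀, Or.inr hi₀, fun i => ?_⟩
      have := hrel i i₀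
      linarith
  -- the witness lies in the commutator subgroup of the free group
  have hwcomm : w₁ ^ p * w₂ ^ (-q) ∈ commutator F := by
    apply mem_commutator_of_coordF_eq_zero
    intro i
    rw [coordF_mul, coordF_zpow, coordF_zpow]
    have := hzero i
    rw [hA, hB] at this
    simp only [] at this ⊢
    linarith
  -- push it into H × K
  have himg : (ι'.comp (QuotientGroup.mk' ((⊤ : Subgroup F).lowerCentralSeries c)))
      (w₁ ^ p * w₂ ^ (-q)) ∈ commutator (H × K) :=
    hom_mem_commutator _ hwcomm
  have hval : (ι'.comp (QuotientGroup.mk' ((⊤ : Subgroup F).lowerCentralSeries c)))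
      (w₁ ^ p * w₂ ^ (-q)) = (((h₀, 1) : H × K) ^ a) ^ p * (((1, k₀) : H × K) ^ b) ^ (-q) := by
    rw [map_mul, map_zpow, map_zpow]
    simp only [MonoidHom.comp_apply]
    rw [hw₁, hw₂, hu, hv]
  rw [hval] at himg
  -- contradiction
  rcases hpq with hp | hq
  · have hfst : (h₀ ^ a) ^ p ∈ commutator H := by
      have := hom_mem_commutator (MonoidHom.fst H K) himg
      simpa using this
    have h2 : (h₀ ^ a) ^ p.natAbs ∈ commutator H :=
      pow_natAbs_mem _ _ _ hfst
    rw [← pow_mul] at h2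
    exact hh₀ (a * p.natAbs)
      (Nat.mul_pos ha (Int.natAbs_pos.mpr hp)) h2
  · have hsnd : (k₀ ^ b) ^ (-q) ∈ commutator K := by
      have := hom_mem_commutator (MonoidHom.snd H K) himg
      simpa using this
    have h2 : (k₀ ^ b) ^ (-q).natAbs ∈ commutator K :=
      pow_natAbs_mem _ _ _ hsnd
    rw [← pow_mul] at h2
    exact hk₀ (b * (-q).natAbs)
      (Nat.mul_pos hb (by simpa using Int.natAbs_pos.mpr hq)) h2
end
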